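/- arXiv:2110.06788 — 6 statements merged into one kernel-verified Lean document; each statement's English description precedes it below -/
import Mathlib

section
/- Let ω be a weight, let f be a monic polynomial of degree d ≥ 1 with simple zeros, none in the open unit disk 𝔻 and at least one on the unit circle 𝕋, and let p_n be the n-th optimal polynomial approximant to 1/f in H²_ω. Then there exists a constant C > 0 such that for all n ∈ ℕ, the Wiener norm of 1 − p_n f is at most C, i.e. ∑_k |coeff_k(1 − p_n f)| ≤ C. -/
open Polynomial Filter Topology MeasureTheory Metric Asymptotics

noncomputable section

/-- A weight: positive, monotone, ω₀ = 1, ω_n/ω_{n-⌊√n⌋} → 1, ∑ 1/ω_k = ∞. -/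
def IsWeight (ω : ℕ → ℝ) : Prop :=
  (∀ k, 0 < ω k) ∧ (Monotone ω ∨ Antitone ω) ∧ ω 0 = 1 ∧
    Filter.Tendsto (fun n => ω n / ω (n - Nat.sqrt n)) Filter.atTop (nhds 1) ∧
    ¬ Summable (fun k => 1 / ω k)

/-- Squared H²_ω norm of a polynomial. -/
def wNormSq (ω : ℕ → ℝ) (g : Polynomial ℂ) : ℝ :=
  ∑ k ∈ Finset.range (g.natDegree + 1), ω k * ‖g.coeff k‖ ^ 2

/-- `p` is the n-th optimal polynomial approximant to `1/f` in `H²_ω`. -/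
def IsOPA (ω : ℕ → ℝ) (f : Polynomial ℂ) (n : ℕ) (p : Polynomial ℂ) : Prop :=
  p.degree ≤ (n : ℕ) ∧ ∀ q : Polynomial ℂ, q.degree ≤ (n : ℕ) →
    wNormSq ω (1 - p * f) ≤ wNormSq ω (1 - q * f)

/-- Partial sums `S_N = ∑_{k=0}^N 1/ω_k`. -/
def S (ω : ℕ → ℝ) (N : ℕ) : ℝ := ∑ k ∈ Finset.range (N + 1), 1 / ω k

/-- Truncated reproducing kernel `k_N(z,b) = ∑_{k=0}^N b̄^k z^k / ω_k`. -/
def kN (ω : ℕ → ℝ) (N : ℕ) (z b : ℂ) : ℂ :=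
  ∑ k ∈ Finset.range (N + 1), (starRingEnd ℂ b) ^ k * z ^ k / (ω k : ℂ)

/-- Zero-counting probability measure of a polynomial: the average of Dirac
masses at its roots, counted with multiplicity. -/
def zeroMeasure (q : Polynomial ℂ) : Measure ℂ :=
  (q.natDegree : ENNReal)⁻¹ • (q.roots.map (fun z => Measure.dirac z)).sum

/-- Normalized arclength (uniform) measure on the unit circle. -/
def nuT : Measure ℂ :=
  (ENNReal.ofReal (2 * Real.pi))⁻¹ •
    Measure.map (fun θ : ℝ => Complex.exp (θ * Complex.I))
      (MeasureTheory.volume.restrict (Set.Ioc 0 (2 * Real.pi)))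


namespace WNB

def wSum (ω : ℕ → ℝ) (N : ℕ) (g : Polynomial ℂ) : ℝ :=
  ∑ k ∈ Finset.range N, ω k * ‖g.coeff k‖ ^ 2

variable {ω : ℕ → ℝ}

lemma S_pos (hω : IsWeight ω) (n : ℕ) : 0 < S ω n :=
  Finset.sum_pos (fun k _ => by have := hω.1 k; positivity)
    ⟨0, Finset.mem_range.2 (Nat.succ_pos n)⟩

lemma S_mono (hω : IsWeight ω) : Monotone (S ω) := by
  intro m n hmn
  exact Finset.sum_le_sum_of_subset_of_nonneg
    (Finset.range_subset_range.2 (by omega))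
    (fun k _ _ => by have := hω.1 k; positivity)

lemma inv_le_S (hω : IsWeight ω) (n : ℕ) : 1 / ω n ≤ S ω n :=
  Finset.single_le_sum (f := fun k => 1 / ω k)
    (fun k _ => by have := hω.1 k; positivity)
    (Finset.mem_range.2 (Nat.lt_succ_self n))

lemma one_le_S (hω : IsWeight ω) (n : ℕ) : 1 ≤ S ω n := by
  have h0 : 1 / ω 0 ≤ S ω 0 := inv_le_S hω 0
  rw [hω.2.2.1] at h0
  simpa using h0.trans (S_mono hω (Nat.zero_le n))

lemma wSum_nonneg (N : ℕ) (g : Polynomial ℂ) (hω : IsWeight ω) : 0 ≤ wSum ω N g :=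
  Finset.sum_nonneg fun k _ => by have := hω.1 k; positivity

lemma wSum_mono (hω : IsWeight ω) {M N : ℕ} (h : M ≤ N) (g : Polynomial ℂ) :
    wSum ω M g ≤ wSum ω N g :=
  Finset.sum_le_sum_of_subset_of_nonneg (Finset.range_subset_range.2 h)
    (fun k _ _ => by have := hω.1 k; positivity)

lemma wSum_eq_of_coeff_zero {a N : ℕ} (h : a ≤ N) (g : Polynomial ℂ)
    (hg : ∀ k, a ≤ k → g.coeff k = 0) : wSum ω N g = wSum ω a g := by
  symm
  apply Finset.sum_subset (Finset.range_subset_range.2 h)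
  intro k _ hk
  rw [hg k (by have := Finset.mem_range.not.1 hk; omega)]
  simp

lemma wNormSq_eq_wSum {N : ℕ} {g : Polynomial ℂ} (h : g.natDegree < N) :
    wNormSq ω g = wSum ω N g := by
  unfold wNormSq wSum
  apply Finset.sum_subset (Finset.range_subset_range.2 h)
  intro k _ hk
  rw [Polynomial.coeff_eq_zero_of_natDegree_lt]
  · simp
  · have := Finset.mem_range.not.1 hk; omega



variable {ω : ℕ → ℝ}

/-- polynomial growth helper -/
lemma nat_le_pow {ρ : ℝ} (hρ : 1 < ρ) : ∃ E : ℝ, 0 < E ∧ ∀ n : ℕ, (n + 1 : ℝ) ≤ E * ρ ^ n := by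
  set δ := ρ - 1 with hδ
  have hδ0 : 0 < δ := by simp [hδ]; linarith
  refine ⟨(min 1 δ)⁻¹, by positivity, fun n => ?_⟩
  have h1 : min 1 δ * (n + 1 : ℝ) ≤ 1 + n * δ := by
    rcases le_total (1:ℝ) δ with h | h
    · simp [min_eq_left h]; nlinarith [Nat.cast_nonneg (α := ℝ) n]
    · rw [min_eq_right h]; nlinarith [Nat.cast_nonneg (α := ℝ) n]
  have h2 : 1 + (n:ℝ) * δ ≤ ρ ^ n := by
    have := one_add_mul_le_pow (a := δ) (by linarith) n
    simpa [hδ] using this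
  rw [inv_mul_eq_div, le_div_iff₀ (by positivity)]
  calc (n + 1 : ℝ) * min 1 δ = min 1 δ * (n+1) := by ring
    _ ≤ 1 + n * δ := h1
    _ ≤ ρ ^ n := h2

/-- eventually two-sided ratio bound -/
lemma ratio_event (hω : IsWeight ω) :
    ∃ K : ℕ, ∀ n ≥ K, ω n ≤ 2 * ω (n - Nat.sqrt n) ∧ ω (n - Nat.sqrt n) ≤ 2 * ω n := by
  have h1 : ∀ᶠ n in atTop, ω n / ω (n - Nat.sqrt n) ≤ 2 :=
    hω.2.2.2.1.eventually (eventually_le_nhds (by norm_num))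
  have h2 : ∀ᶠ n in atTop, (1:ℝ)/2 < ω n / ω (n - Nat.sqrt n) :=
    hω.2.2.2.1.eventually (eventually_gt_nhds (by norm_num))
  obtain ⟨K, hK⟩ := (h1.and h2).exists_forall_of_atTop
  refine ⟨K, fun n hn => ?_⟩
  obtain ⟨ha, hb⟩ := hK n hn
  have hp1 := hω.1 n
  have hp2 := hω.1 (n - Nat.sqrt n)
  constructor
  · rw [div_le_iff₀ hp2] at ha; linarith
  · rw [lt_div_iff₀ hp2] at hb; linarith

/-- subexponential growth -/
lemma subexp (hω : IsWeight ω) {ε : ℝ} (hε : 0 < ε) :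
    ∃ B : ℝ, 1 ≤ B ∧ ∀ n, ω n ≤ B * (1 + ε) ^ n := by
  have h1 : ∀ᶠ n in atTop, ω n / ω (n - Nat.sqrt n) ≤ 1 + ε :=
    hω.2.2.2.1.eventually (eventually_le_nhds (by linarith))
  obtain ⟨K, hK⟩ := h1.exists_forall_of_atTop
  have hne : (Finset.range (K+1)).Nonempty := ⟨0, by simp⟩
  set B : ℝ := max 1 ((Finset.range (K+1)).sup' hne ω) with hB
  have hB1 : 1 ≤ B := le_max_left _ _
  refine ⟨B, hB1, fun n => ?_⟩
  induction n using Nat.strong_induction_on with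
  | _ n ih =>
    rcases le_or_gt n K with h | h
    · calc ω n ≤ (Finset.range (K+1)).sup' hne ω :=
            Finset.le_sup' ω (Finset.mem_range.2 (by omega))
        _ ≤ B := le_max_right _ _
        _ ≤ B * (1+ε)^n := by nlinarith [one_le_pow₀ (by linarith : (1:ℝ) ≤ 1+ε) (n := n)]
    · have hn1 : 1 ≤ n := by omega
      have hs : 1 ≤ Nat.sqrt n := Nat.sqrt_pos.2 (by omega)
      set m := n - Nat.sqrt n with hm
      have hmn : m < n := by omega
      have step : ω n ≤ (1+ε) * ω m := by
        have := hK n (by omega)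
        rw [div_le_iff₀ (hω.1 m)] at this; linarith
      calc ω n ≤ (1+ε) * ω m := step
        _ ≤ (1+ε) * (B * (1+ε)^m) := by
            have := ih m hmn
            nlinarith
        _ = B * (1+ε)^(m+1) := by ring
        _ ≤ B * (1+ε)^n := by
            have : (1+ε)^(m+1) ≤ (1+ε)^n := pow_le_pow_right₀ (by linarith) (by omega)
            nlinarith

/-- two-sided ratio over bounded shifts -/
lemma ratio_shift (hω : IsWeight ω) (d : ℕ) :
    ∃ M : ℝ, 1 ≤ M ∧ ∀ j i, i ≤ d → ω (j+i) ≤ M * ω j ∧ ω j ≤ M * ω (j+i) := by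
  obtain ⟨K, hK⟩ := ratio_event hω
  set J : ℕ := max K (d*d) with hJ
  have hne : (Finset.range (J+d+1)).Nonempty := ⟨0, by simp⟩
  set B1 : ℝ := (Finset.range (J+d+1)).sup' hne ω with hB1
  set B2 : ℝ := (Finset.range (J+d+1)).sup' hne (fun j => (ω j)⁻¹) with hB2
  set M : ℝ := max 2 (B1 * B2) with hM
  have hM1 : 1 ≤ M := le_trans (by norm_num) (le_max_left _ _)
  refine ⟨M, hM1, fun j i hi => ?_⟩
  rcases le_or_gt j J with hj | hj
  · -- small j : both indices in range
    have m1 : j ∈ Finset.range (J+d+1) := Finset.mem_range.2 (by omega)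
    have m2 : j + i ∈ Finset.range (J+d+1) := Finset.mem_range.2 (by omega)
    have key : ∀ a b : ℕ, a ∈ Finset.range (J+d+1) → b ∈ Finset.range (J+d+1) →
        ω a ≤ M * ω b := by
      intro a b ha hb
      have h1 : ω a ≤ B1 := Finset.le_sup' ω ha
      have h2 : (ω b)⁻¹ ≤ B2 := Finset.le_sup' (fun j => (ω j)⁻¹) hb
      have hb0 := hω.1 b
      have : ω a ≤ B1 * B2 * ω b := by
        have h3 : (1:ℝ) ≤ B2 * ω b := by
          rw [← inv_mul_cancel₀ (ne_of_gt hb0)]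
          exact mul_le_mul_of_nonneg_right h2 hb0.le
        nlinarith [hω.1 a]
      exact this.trans (mul_le_mul_of_nonneg_right (le_max_right _ _) hb0.le)
    exact ⟨key _ _ m2 m1, key _ _ m1 m2⟩
  · -- large j
    set n := j + i with hn
    have hsq : i ≤ Nat.sqrt n := by
      have : d ≤ Nat.sqrt j := Nat.le_sqrt.2 (by omega)
      exact le_trans (le_trans hi this) (Nat.sqrt_le_sqrt (by omega))
    have hmj : n - Nat.sqrt n ≤ j := by omega
    have hnK : n ≥ K := by omega
    obtain ⟨hu, hl⟩ := hK n hnK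
    have h2M : (2:ℝ) ≤ M := le_max_left _ _
    rcases hω.2.1 with hmono | hanti
    · have e1 : ω (n - Nat.sqrt n) ≤ ω j := hmono hmj
      have e2 : ω j ≤ ω n := hmono (by omega)
      refine ⟨?_, ?_⟩
      · calc ω (j+i) = ω n := rfl
          _ ≤ 2 * ω (n - Nat.sqrt n) := hu
          _ ≤ 2 * ω j := by linarith
          _ ≤ M * ω j := mul_le_mul_of_nonneg_right h2M (hω.1 j).le
      · calc ω j ≤ ω n := e2
          _ = 1 * ω (j+i) := (one_mul _).symm
          _ ≤ M * ω (j+i) := mul_le_mul_of_nonneg_right hM1 (hω.1 _).le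
    · have e1 : ω j ≤ ω (n - Nat.sqrt n) := hanti hmj
      have e2 : ω n ≤ ω j := hanti (by omega)
      refine ⟨?_, ?_⟩
      · calc ω (j+i) = ω n := rfl
          _ ≤ ω j := e2
          _ = 1 * ω j := (one_mul _).symm
          _ ≤ M * ω j := mul_le_mul_of_nonneg_right hM1 (hω.1 _).le
      · calc ω j ≤ ω (n - Nat.sqrt n) := e1
          _ ≤ 2 * ω n := hl
          _ ≤ M * ω (j+i) := mul_le_mul_of_nonneg_right h2M (hω.1 _).le


lemma wSum_C_mul (c : ℂ) (g : Polynomial ℂ) (N : ℕ) :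
    wSum ω N (Polynomial.C c * g) = ‖c‖ ^ 2 * wSum ω N g := by
  unfold wSum
  rw [Finset.mul_sum]
  apply Finset.sum_congr rfl
  intro k _
  rw [Polynomial.coeff_C_mul, norm_mul, mul_pow]
  ring

lemma wSum_X_pow_mul (hω : IsWeight ω) {d : ℕ} {M : ℝ}
    (hM : ∀ j i, i ≤ d → ω (j+i) ≤ M * ω j ∧ ω j ≤ M * ω (j+i))
    (hM1 : 1 ≤ M) {i : ℕ} (hi : i ≤ d) (g : Polynomial ℂ) (N : ℕ) :
    wSum ω N (Polynomial.X ^ i * g) ≤ M * wSum ω N g := by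
  have hco : ∀ k, (Polynomial.X ^ i * g).coeff k =
      if i ≤ k then g.coeff (k - i) else 0 := by
    intro k; rw [mul_comm, Polynomial.coeff_mul_X_pow']
  have step1 : wSum ω N (Polynomial.X ^ i * g) =
      ∑ k ∈ Finset.range N, (if i ≤ k then ω k * ‖g.coeff (k-i)‖ ^ 2 else 0) := by
    unfold wSum
    apply Finset.sum_congr rfl
    intro k _
    rw [hco k]
    split_ifs <;> simp
  have step2 : ∑ k ∈ Finset.range N, (if i ≤ k then ω k * ‖g.coeff (k-i)‖ ^ 2 else 0)
      = ∑ k ∈ Finset.Ico i N, ω k * ‖g.coeff (k-i)‖ ^ 2 := by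
    rw [Finset.sum_ite, Finset.sum_const_zero, add_zero]
    apply Finset.sum_congr
    · ext k; simp only [Finset.mem_filter, Finset.mem_range, Finset.mem_Ico]; omega
    · intro k _; rfl
  have step3 : ∑ k ∈ Finset.Ico i N, ω k * ‖g.coeff (k-i)‖ ^ 2
      = ∑ j ∈ Finset.range (N - i), ω (i + j) * ‖g.coeff j‖ ^ 2 := by
    rw [Finset.sum_Ico_eq_sum_range]
    apply Finset.sum_congr rfl
    intro j _
    have hji : i + j - i = j := by omega
    rw [hji]
  rw [step1, step2, step3]
  calc ∑ j ∈ Finset.range (N - i), ω (i + j) * ‖g.coeff j‖ ^ 2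
      ≤ ∑ j ∈ Finset.range (N - i), M * (ω j * ‖g.coeff j‖ ^ 2) := by
        apply Finset.sum_le_sum
        intro j _
        have h1 := (hM j i hi).1
        have h2 : ω (i + j) ≤ M * ω j := by rw [add_comm]; exact h1
        nlinarith [sq_nonneg (‖g.coeff j‖), hω.1 j]
    _ = M * ∑ j ∈ Finset.range (N - i), ω j * ‖g.coeff j‖ ^ 2 := by
        rw [Finset.mul_sum]
    _ ≤ M * wSum ω N g := by
        apply mul_le_mul_of_nonneg_left _ (by linarith)
        exact wSum_mono hω (by omega) g

lemma wSum_sum_le (hω : IsWeight ω) {α : Type*} (t : Finset α) (u : α → Polynomial ℂ) (N : ℕ) :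
    wSum ω N (∑ x ∈ t, u x) ≤ t.card * ∑ x ∈ t, wSum ω N (u x) := by
  have key : ∀ k, ‖(∑ x ∈ t, u x).coeff k‖ ^ 2 ≤
      t.card * ∑ x ∈ t, ‖(u x).coeff k‖ ^ 2 := by
    intro k
    rw [Polynomial.finset_sum_coeff]
    calc ‖∑ x ∈ t, (u x).coeff k‖ ^ 2
        ≤ (∑ x ∈ t, ‖(u x).coeff k‖) ^ 2 := by
          exact pow_le_pow_left₀ (by positivity) (norm_sum_le _ _) 2
        _ ≤ (∑ x ∈ t, ‖(u x).coeff k‖ ^ 2) * (∑ x ∈ t, (1:ℝ)^2) := by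
          have := Finset.sum_mul_sq_le_sq_mul_sq t (fun x => ‖(u x).coeff k‖) 1
          simpa using this
        _ = t.card * ∑ x ∈ t, ‖(u x).coeff k‖ ^ 2 := by
          simp [mul_comm]
  calc wSum ω N (∑ x ∈ t, u x)
      ≤ ∑ k ∈ Finset.range N, ω k * (t.card * ∑ x ∈ t, ‖(u x).coeff k‖ ^ 2) := by
        apply Finset.sum_le_sum
        intro k _
        exact mul_le_mul_of_nonneg_left (key k) (hω.1 k).le
    _ = ∑ k ∈ Finset.range N, ∑ x ∈ t, (t.card : ℝ) * (ω k * ‖(u x).coeff k‖ ^ 2) := by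
        apply Finset.sum_congr rfl
        intro k _
        rw [Finset.mul_sum, Finset.mul_sum]
        apply Finset.sum_congr rfl
        intro x _
        ring
    _ = ∑ x ∈ t, ∑ k ∈ Finset.range N, (t.card : ℝ) * (ω k * ‖(u x).coeff k‖ ^ 2) :=
        Finset.sum_comm
    _ = t.card * ∑ x ∈ t, wSum ω N (u x) := by
        unfold wSum
        rw [Finset.mul_sum]
        apply Finset.sum_congr rfl
        intro x _
        rw [Finset.mul_sum]


/-- building block: truncated kernel (circle roots) or scaled monomial (outside roots) -/
def ePoly (ω : ℕ → ℝ) (b : ℂ) (n : ℕ) : Polynomial ℂ :=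
  if ‖b‖ = 1 then
    ∑ k ∈ Finset.range (n+1),
      Polynomial.C ((starRingEnd ℂ) b ^ k / ((ω k : ℂ) * ((S ω n : ℝ) : ℂ))) * Polynomial.X ^ k
  else Polynomial.C (b⁻¹ ^ n) * Polynomial.X ^ n

lemma coeff_sum_C_X (a : ℕ → ℂ) (m j : ℕ) :
    (∑ k ∈ Finset.range m, Polynomial.C (a k) * Polynomial.X ^ k).coeff j
      = if j < m then a j else 0 := by
  rw [Polynomial.finset_sum_coeff]
  simp only [Polynomial.coeff_C_mul, Polynomial.coeff_X_pow, mul_ite, mul_one, mul_zero]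
  rw [Finset.sum_ite_eq (Finset.range m) j a]
  simp [Finset.mem_range]

lemma natDegree_ePoly (ω : ℕ → ℝ) (b : ℂ) (n : ℕ) : (ePoly ω b n).natDegree ≤ n := by
  unfold ePoly
  split_ifs
  · apply Polynomial.natDegree_sum_le_of_forall_le
    intro k hk
    calc (Polynomial.C _ * Polynomial.X ^ k).natDegree
        ≤ (Polynomial.X ^ k : Polynomial ℂ).natDegree := Polynomial.natDegree_C_mul_le _ _
      _ ≤ n := by rw [Polynomial.natDegree_X_pow]; exact Nat.lt_succ_iff.1 (Finset.mem_range.1 hk)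
  · calc (Polynomial.C _ * Polynomial.X ^ n).natDegree
        ≤ (Polynomial.X ^ n : Polynomial ℂ).natDegree := Polynomial.natDegree_C_mul_le _ _
      _ ≤ n := by rw [Polynomial.natDegree_X_pow]

lemma eval_ePoly (hω : IsWeight ω) {b : ℂ} (hb : 1 ≤ ‖b‖) (n : ℕ) :
    (ePoly ω b n).eval b = 1 := by
  unfold ePoly
  split_ifs with h
  · have hbb : (starRingEnd ℂ) b * b = 1 := by
      rw [mul_comm, Complex.mul_conj]
      rw [Complex.normSq_eq_norm_sq, h]
      norm_num
    have hS0 : S ω n ≠ 0 := ne_of_gt (S_pos hω n)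
    have hw0 : ∀ k, (ω k : ℂ) ≠ 0 := fun k => by
      exact_mod_cast ne_of_gt (hω.1 k)
    rw [Polynomial.eval_finset_sum]
    have : ∀ k ∈ Finset.range (n+1),
        ((Polynomial.C ((starRingEnd ℂ) b ^ k / ((ω k : ℂ) * ((S ω n : ℝ) : ℂ)))) * Polynomial.X ^ k).eval b
        = ((1 / ω k : ℝ) : ℂ) * ((S ω n : ℝ) : ℂ)⁻¹ := by
      intro k _
      rw [Polynomial.eval_mul, Polynomial.eval_C, Polynomial.eval_pow, Polynomial.eval_X]
      rw [div_mul_eq_mul_div, ← mul_pow, hbb, one_pow]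
      push_cast
      rw [div_mul_eq_div_div, div_eq_mul_inv]
    rw [Finset.sum_congr rfl this, ← Finset.sum_mul]
    have hsum : ∑ k ∈ Finset.range (n+1), ((1 / ω k : ℝ) : ℂ) = ((S ω n : ℝ) : ℂ) := by
      rw [S]
      push_cast
      ring
    rw [hsum]
    rw [mul_inv_cancel₀ (by exact_mod_cast hS0)]
  · have hb1 : 1 < ‖b‖ := lt_of_le_of_ne hb (fun he => h he.symm)
    have hb0 : b ≠ 0 := by
      intro he; rw [he, norm_zero] at hb1; norm_num at hb1
    rw [Polynomial.eval_mul, Polynomial.eval_C, Polynomial.eval_pow, Polynomial.eval_X,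
      ← mul_pow, inv_mul_cancel₀ hb0, one_pow]

lemma S_mul_w_le (hω : IsWeight ω) (n : ℕ) : S ω n * ω n ≤ (n+1) * (ω n + 1) := by
  rw [S, Finset.sum_mul]
  calc ∑ k ∈ Finset.range (n+1), 1 / ω k * ω n
      ≤ ∑ k ∈ Finset.range (n+1), (ω n + 1) := by
        apply Finset.sum_le_sum
        intro k hk
        have hk' : k ≤ n := Nat.lt_succ_iff.1 (Finset.mem_range.1 hk)
        have h1 := hω.1 k
        have h2 := hω.1 n
        rcases hω.2.1 with hmono | hanti
        · have h01 : (1:ℝ) ≤ ω k := by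
            have := hmono (Nat.zero_le k); rw [hω.2.2.1] at this; linarith
          rw [div_mul_eq_mul_div, one_mul, div_le_iff₀ h1]
          nlinarith
        · have : ω n ≤ ω k := hanti hk'
          rw [div_mul_eq_mul_div, one_mul, div_le_iff₀ h1]
          nlinarith
    _ = (n+1) * (ω n + 1) := by
        rw [Finset.sum_const, Finset.card_range, nsmul_eq_mul]
        push_cast
        ring

lemma ePoly_bound (hω : IsWeight ω) {b : ℂ} (hb : 1 ≤ ‖b‖) :
    ∃ E : ℝ, 0 < E ∧ ∀ n N : ℕ, n + 1 ≤ N →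
      wSum ω N (ePoly ω b n) * S ω n ≤ E := by
  by_cases h : ‖b‖ = 1
  · refine ⟨1, one_pos, fun n N hN => ?_⟩
    have hcoeff : ∀ j, (ePoly ω b n).coeff j =
        if j < n + 1 then (starRingEnd ℂ) b ^ j / ((ω j : ℂ) * ((S ω n : ℝ) : ℂ)) else 0 := by
      intro j
      unfold ePoly
      rw [if_pos h]
      exact coeff_sum_C_X _ _ j
    have hz : ∀ k, n + 1 ≤ k → (ePoly ω b n).coeff k = 0 := by
      intro k hk; rw [hcoeff k, if_neg (by omega)]
    rw [wSum_eq_of_coeff_zero hN _ hz]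
    have hSpos := S_pos hω n
    have keyval : ∀ k ∈ Finset.range (n+1),
        ω k * ‖(ePoly ω b n).coeff k‖ ^ 2 = (1 / ω k) * (1 / (S ω n))^2 := by
      intro k hk
      rw [hcoeff k, if_pos (Finset.mem_range.1 hk)]
      have h1 := hω.1 k
      rw [norm_div, norm_pow, Complex.norm_conj, h, one_pow, norm_mul, Complex.norm_real, Complex.norm_real,
        Real.norm_eq_abs, Real.norm_eq_abs,
        abs_of_pos h1, abs_of_pos hSpos]
      field_simp
    rw [wSum, Finset.sum_congr rfl keyval, ← Finset.sum_mul]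
    rw [show ∑ k ∈ Finset.range (n+1), 1 / ω k = S ω n from rfl]
    have h1 : S ω n * (1 / S ω n) ^ 2 * S ω n = (S ω n * (S ω n)⁻¹) * (S ω n * (S ω n)⁻¹) := by
      rw [one_div, pow_two]
      ring
    rw [h1, mul_inv_cancel₀ (ne_of_gt hSpos), one_mul]
  · have hb1 : 1 < ‖b‖ := lt_of_le_of_ne hb (fun he => h he.symm)
    have hb0 : b ≠ 0 := by intro he; rw [he, norm_zero] at hb1; norm_num at hb1
    set ρ : ℝ := ‖b‖ with hρ
    obtain ⟨B, hB1, hB⟩ := subexp hω (ε := ρ - 1) (by linarith)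
    obtain ⟨E', hE'0, hE'⟩ := nat_le_pow hb1
    refine ⟨2 * B * E', by positivity, fun n N hN => ?_⟩
    have hρn : (0:ℝ) < ρ ^ n := by positivity
    have hcoeff : ∀ j, (ePoly ω b n).coeff j = if j = n then b⁻¹ ^ n else 0 := by
      intro j
      unfold ePoly
      rw [if_neg h, Polynomial.coeff_C_mul, Polynomial.coeff_X_pow, mul_ite, mul_one, mul_zero]
    have hz : ∀ k, n + 1 ≤ k → (ePoly ω b n).coeff k = 0 := by
      intro k hk; rw [hcoeff k, if_neg (by omega)]
    rw [wSum_eq_of_coeff_zero hN _ hz]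
    have hval : wSum ω (n+1) (ePoly ω b n) = ω n * (ρ ^ n)⁻¹ ^ 2 := by
      rw [wSum]
      rw [Finset.sum_eq_single n]
      · rw [hcoeff n, if_pos rfl, norm_pow, norm_inv, inv_pow]
      · intro k hk hkn
        rw [hcoeff k, if_neg hkn]
        simp
      · intro hn; exact absurd (Finset.self_mem_range_succ n) hn
    rw [hval]
    have hSw := S_mul_w_le hω n
    have hwB := hB n
    have hρpow : (1 + (ρ - 1)) ^ n = ρ ^ n := by norm_num
    rw [hρpow] at hwB
    have hn1 : (0:ℝ) < (n:ℝ) + 1 := by positivity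
    have hpos1 : (0:ℝ) ≤ ω n + 1 := by have := hω.1 n; linarith
    have h1 : ω n + 1 ≤ 2 * B * ρ ^ n := by
      have hBρ : 1 ≤ B * ρ ^ n := by
        have : (1:ℝ) ≤ ρ ^ n := one_le_pow₀ (by linarith)
        nlinarith
      nlinarith
    have hSn : S ω n ≤ ((n:ℝ)+1) * (ω n + 1) / ω n := by
      rw [le_div_iff₀ (hω.1 n)]; linarith
    -- goal : ω n * (ρ ^ n)⁻¹ ^ 2 * S ω n ≤ 2 * B * E'
    have hSpos := S_pos hω n
    have hw := hω.1 n
    have key : ω n * (ρ ^ n)⁻¹ ^ 2 * S ω n ≤ ((n:ℝ)+1) * (ω n + 1) * ((ρ ^ n)⁻¹)^2 := by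
      have h2 : ω n * S ω n ≤ ((n:ℝ)+1) * (ω n + 1) := by
        calc ω n * S ω n = S ω n * ω n := by ring
          _ ≤ ((n:ℝ)+1) * (ω n + 1) := by exact_mod_cast hSw
      have h3 : (0:ℝ) < ((ρ ^ n)⁻¹)^2 := by positivity
      calc ω n * (ρ ^ n)⁻¹ ^ 2 * S ω n = (ω n * S ω n) * ((ρ ^ n)⁻¹)^2 := by ring
        _ ≤ (((n:ℝ)+1) * (ω n + 1)) * ((ρ ^ n)⁻¹)^2 :=
            mul_le_mul_of_nonneg_right h2 h3.le
    calc ω n * (ρ ^ n)⁻¹ ^ 2 * S ω n ≤ ((n:ℝ)+1) * (ω n + 1) * ((ρ ^ n)⁻¹)^2 := key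
      _ ≤ (E' * ρ ^ n) * (2 * B * ρ ^ n) * ((ρ ^ n)⁻¹)^2 := by
          apply mul_le_mul_of_nonneg_right _ (by positivity)
          exact mul_le_mul (hE' n) h1 hpos1 (by positivity)
      _ = 2 * B * E' * ((ρ ^ n) * (ρ ^ n)⁻¹) * ((ρ ^ n) * (ρ ^ n)⁻¹) := by ring
      _ = 2 * B * E' := by rw [mul_inv_cancel₀ (ne_of_gt hρn)]; ring

lemma S_shift (hω : IsWeight ω) {d : ℕ} {M : ℝ}
    (hM : ∀ j i, i ≤ d → ω (j+i) ≤ M * ω j ∧ ω j ≤ M * ω (j+i))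
    (hM1 : 1 ≤ M) (n : ℕ) :
    S ω (n + d) ≤ (1 + d * M) * S ω n := by
  induction d with
  | zero => norm_num
  | succ d ih =>
    have hstep : ∀ j i, i ≤ d → ω (j+i) ≤ M * ω j ∧ ω j ≤ M * ω (j+i) :=
      fun j i hi => hM j i (by omega)
    have ihd := ih hstep
    have hterm : 1 / ω (n + d + 1) ≤ M * S ω n := by
      have h1 := (hM n (d+1) (le_refl _)).2
      have h2 : 1 / ω (n + (d+1)) ≤ M / ω n := by
        rw [div_le_div_iff₀ (hω.1 _) (hω.1 n)]
        have := hω.1 (n + (d+1))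
        nlinarith
      have h3 : M / ω n ≤ M * S ω n := by
        have h4 := inv_le_S hω n
        have h5 : M * (1 / ω n) ≤ M * S ω n :=
          mul_le_mul_of_nonneg_left h4 (by linarith)
        calc M / ω n = M * (1 / ω n) := by ring
          _ ≤ M * S ω n := h5
      calc 1 / ω (n + d + 1) = 1 / ω (n + (d+1)) := by ring_nf
        _ ≤ M / ω n := h2
        _ ≤ M * S ω n := h3
    have hexp : S ω (n + (d+1)) = S ω (n + d) + 1 / ω (n + d + 1) := by
      rw [S, S, show n + (d+1) + 1 = (n + d + 1) + 1 by omega, Finset.sum_range_succ]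
    rw [hexp]
    have hSn := S_pos hω n
    calc S ω (n + d) + 1 / ω (n + d + 1) ≤ (1 + d * M) * S ω n + M * S ω n := by linarith
      _ = (1 + (d+1) * M) * S ω n := by push_cast; ring
      _ = (1 + ((d:ℕ)+1 : ℕ) * M) * S ω n := by push_cast; ring

lemma prod_X_sub_C_dvd (s : Finset ℂ) (g : Polynomial ℂ)
    (h : ∀ b ∈ s, g.eval b = 0) : (∏ b ∈ s, (Polynomial.X - Polynomial.C b)) ∣ g := by
  induction s using Finset.induction_on generalizing g with
  | empty => simp
  | @insert a s ha ih =>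
    have ha0 : g.eval a = 0 := h a (Finset.mem_insert_self a s)
    have h1 : (Polynomial.X - Polynomial.C a) ∣ g := Polynomial.dvd_iff_isRoot.2 ha0
    obtain ⟨g1, hg1⟩ := h1
    have h2 : ∀ b ∈ s, g1.eval b = 0 := by
      intro b hb
      have hba : b ≠ a := by rintro rfl; exact ha hb
      have := h b (Finset.mem_insert_of_mem hb)
      rw [hg1] at this
      simp only [Polynomial.eval_mul, Polynomial.eval_sub, Polynomial.eval_X, Polynomial.eval_C] at this
      rcases mul_eq_zero.1 this with h' | h'
      · exact absurd (sub_eq_zero.1 h') hba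
      · exact h'
    obtain ⟨g2, hg2⟩ := ih g1 h2
    rw [Finset.prod_insert ha, hg1, hg2]
    exact ⟨g2, by ring⟩


def lagP (s : Finset ℂ) (b : ℂ) : Polynomial ℂ :=
  ∏ c ∈ s.erase b, (Polynomial.C (b - c)⁻¹ * (Polynomial.X - Polynomial.C c))

lemma natDegree_lagP (s : Finset ℂ) (b : ℂ) : (lagP s b).natDegree ≤ (s.erase b).card := by
  unfold lagP
  calc (∏ c ∈ s.erase b, (Polynomial.C (b - c)⁻¹ * (Polynomial.X - Polynomial.C c))).natDegree
      ≤ ∑ c ∈ s.erase b, (Polynomial.C (b - c)⁻¹ * (Polynomial.X - Polynomial.C c)).natDegree :=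
        Polynomial.natDegree_prod_le _ _
    _ ≤ ∑ c ∈ s.erase b, 1 := by
        apply Finset.sum_le_sum
        intro c _
        calc (Polynomial.C (b - c)⁻¹ * (Polynomial.X - Polynomial.C c)).natDegree
            ≤ (Polynomial.X - Polynomial.C c).natDegree := Polynomial.natDegree_C_mul_le _ _
          _ = 1 := Polynomial.natDegree_X_sub_C c
    _ = (s.erase b).card := by simp

lemma eval_lagP_self {s : Finset ℂ} {b : ℂ} : (lagP s b).eval b = 1 := by
  unfold lagP
  rw [Polynomial.eval_prod]
  apply Finset.prod_eq_one
  intro c hc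
  have hcb : c ≠ b := (Finset.mem_erase.1 hc).1
  rw [Polynomial.eval_mul, Polynomial.eval_C, Polynomial.eval_sub, Polynomial.eval_X,
    Polynomial.eval_C, inv_mul_cancel₀ (sub_ne_zero.2 (fun he => hcb he.symm))]

lemma eval_lagP_other {s : Finset ℂ} {b c : ℂ} (hc : c ∈ s) (hcb : c ≠ b) :
    (lagP s b).eval c = 0 := by
  unfold lagP
  rw [Polynomial.eval_prod]
  apply Finset.prod_eq_zero (Finset.mem_erase.2 ⟨hcb, hc⟩)
  simp

lemma wSum_mul_poly (hω : IsWeight ω) {d : ℕ} {M : ℝ}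
    (hM : ∀ j i, i ≤ d → ω (j+i) ≤ M * ω j ∧ ω j ≤ M * ω (j+i)) (hM1 : 1 ≤ M)
    (h : Polynomial ℂ) (hh : h.natDegree < d) (g : Polynomial ℂ) (N : ℕ) :
    wSum ω N (g * h) ≤ (d : ℝ) * M * (∑ i ∈ Finset.range d, ‖h.coeff i‖ ^ 2)
      * wSum ω N g := by
  have hrep : g * h = ∑ i ∈ Finset.range d, Polynomial.C (h.coeff i) * (Polynomial.X ^ i * g) := by
    conv_lhs => rw [Polynomial.as_sum_range' h d hh]
    rw [Finset.mul_sum]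
    apply Finset.sum_congr rfl
    intro i _
    rw [← Polynomial.C_mul_X_pow_eq_monomial]
    ring
  rw [hrep]
  calc wSum ω N (∑ i ∈ Finset.range d, Polynomial.C (h.coeff i) * (Polynomial.X ^ i * g))
      ≤ (Finset.range d).card * ∑ i ∈ Finset.range d,
          wSum ω N (Polynomial.C (h.coeff i) * (Polynomial.X ^ i * g)) :=
        wSum_sum_le hω _ _ N
    _ = (d : ℝ) * ∑ i ∈ Finset.range d,
          ‖h.coeff i‖ ^ 2 * wSum ω N (Polynomial.X ^ i * g) := by
        rw [Finset.card_range]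
        congr 1
        apply Finset.sum_congr rfl
        intro i _
        exact wSum_C_mul _ _ _
    _ ≤ (d : ℝ) * ∑ i ∈ Finset.range d,
          ‖h.coeff i‖ ^ 2 * (M * wSum ω N g) := by
        apply mul_le_mul_of_nonneg_left _ (by positivity)
        apply Finset.sum_le_sum
        intro i hi
        exact mul_le_mul_of_nonneg_left
          (wSum_X_pow_mul hω hM hM1 (Nat.le_of_lt_succ (Nat.lt_succ_of_lt (Finset.mem_range.1 hi))) g N)
          (by positivity)
    _ = (d : ℝ) * M * (∑ i ∈ Finset.range d, ‖h.coeff i‖ ^ 2) * wSum ω N g := by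
        rw [Finset.mul_sum]
        rw [show (d : ℝ) * M * (∑ i ∈ Finset.range d, ‖h.coeff i‖ ^ 2) * wSum ω N g
            = ∑ i ∈ Finset.range d, (d : ℝ) * M * ‖h.coeff i‖ ^ 2 * wSum ω N g by
          rw [Finset.mul_sum, Finset.sum_mul]]
        apply Finset.sum_congr rfl
        intro i _
        ring

lemma residual_bound (hω : IsWeight ω) (s : Finset ℂ)
    (hs : ∀ b ∈ s, 1 ≤ ‖b‖) {d : ℕ} (hd : 0 < d) (hcard : s.card = d) :
    ∃ C0 : ℝ, 0 < C0 ∧ ∀ n : ℕ, ∃ R : Polynomial ℂ,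
      R.natDegree ≤ n + d ∧ (∀ b ∈ s, R.eval b = 1) ∧
      wSum ω (n + d + 1) R * S ω n ≤ C0 := by
  obtain ⟨M, hM1, hM⟩ := ratio_shift hω d
  have hEx : ∀ b : ℂ, ∃ E : ℝ, 0 < E ∧ (1 ≤ ‖b‖ → ∀ n N : ℕ, n + 1 ≤ N →
      wSum ω N (ePoly ω b n) * S ω n ≤ E) := by
    intro b
    by_cases hb : 1 ≤ ‖b‖
    · obtain ⟨E, hE0, hE⟩ := ePoly_bound hω hb
      exact ⟨E, hE0, fun _ => hE⟩
    · exact ⟨1, one_pos, fun hb' => absurd hb' hb⟩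
  choose E hE0 hE using hEx
  set H : ℂ → ℝ := fun b => ∑ i ∈ Finset.range d, ‖(lagP s b).coeff i‖ ^ 2 with hH
  refine ⟨(d:ℝ) * ∑ b ∈ s, (d : ℝ) * M * H b * E b + 1, ?_, fun n => ?_⟩
  · have : (0:ℝ) ≤ (d:ℝ) * ∑ b ∈ s, (d : ℝ) * M * H b * E b := by
      apply mul_nonneg (by positivity)
      apply Finset.sum_nonneg
      intro b hb
      have := hE0 b
      have hHb : 0 ≤ H b := Finset.sum_nonneg fun i _ => by positivity
      positivity
    linarith
  set R : Polynomial ℂ := ∑ b ∈ s, ePoly ω b n * lagP s b with hR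
  have hdegP : ∀ b ∈ s, (lagP s b).natDegree < d := by
    intro b hb
    have h1 := natDegree_lagP s b
    have h2 : (s.erase b).card = d - 1 := by rw [Finset.card_erase_of_mem hb, hcard]
    omega
  refine ⟨R, ?_, ?_, ?_⟩
  · apply Polynomial.natDegree_sum_le_of_forall_le
    intro b hb
    calc (ePoly ω b n * lagP s b).natDegree
        ≤ (ePoly ω b n).natDegree + (lagP s b).natDegree := Polynomial.natDegree_mul_le
      _ ≤ n + d := by
          have := natDegree_ePoly ω b n
          have := hdegP b hb
          omega
  · intro b hb
    rw [hR, Polynomial.eval_finset_sum]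
    rw [Finset.sum_eq_single b]
    · rw [Polynomial.eval_mul, eval_ePoly hω (hs b hb) n, eval_lagP_self, one_mul]
    · intro c hc hcb
      rw [Polynomial.eval_mul, eval_lagP_other hb (fun he => hcb (by rw [he]) |>.elim), mul_zero]
    · intro hb'; exact absurd hb hb'
  · have hSpos := S_pos hω n
    calc wSum ω (n + d + 1) R * S ω n
        ≤ ((s.card : ℝ) * ∑ b ∈ s, wSum ω (n+d+1) (ePoly ω b n * lagP s b)) * S ω n := by
          apply mul_le_mul_of_nonneg_right (wSum_sum_le hω s _ _) hSpos.le
      _ = (d:ℝ) * ∑ b ∈ s, wSum ω (n+d+1) (ePoly ω b n * lagP s b) * S ω n := by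
          rw [hcard, Finset.mul_sum, Finset.mul_sum, Finset.sum_mul]
          apply Finset.sum_congr rfl
          intro b _
          ring
      _ ≤ (d:ℝ) * ∑ b ∈ s, (d : ℝ) * M * H b * E b := by
          apply mul_le_mul_of_nonneg_left _ (by positivity)
          apply Finset.sum_le_sum
          intro b hb
          have hmul := wSum_mul_poly hω hM hM1 (lagP s b) (hdegP b hb) (ePoly ω b n) (n+d+1)
          have hEb := hE b (hs b hb) n (n+d+1) (by omega)
          have hHb : 0 ≤ H b := Finset.sum_nonneg fun i _ => by positivity
          calc wSum ω (n+d+1) (ePoly ω b n * lagP s b) * S ω n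
              ≤ ((d : ℝ) * M * H b * wSum ω (n+d+1) (ePoly ω b n)) * S ω n := by
                apply mul_le_mul_of_nonneg_right _ hSpos.le
                exact hmul
            _ = (d : ℝ) * M * H b * (wSum ω (n+d+1) (ePoly ω b n) * S ω n) := by ring
            _ ≤ (d : ℝ) * M * H b * E b := by
                apply mul_le_mul_of_nonneg_left hEb
                positivity
      _ ≤ (d:ℝ) * (∑ b ∈ s, (d : ℝ) * M * H b * E b) + 1 := by linarith


end WNB

open WNB

/-- Uniform bound for the Wiener norm of `1 - p_n f`. -/
theorem wiener_norm_bound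
    (ω : ℕ → ℝ) (hω : IsWeight ω) (f : Polynomial ℂ) (d : ℕ) (hd : 1 ≤ d)
    (hmonic : f.Monic) (hdeg : f.natDegree = d)
    (hsimple : f.roots.Nodup)
    (hnodisk : ∀ z ∈ f.roots, 1 ≤ ‖z‖)
    (hcirc : ∃ z ∈ f.roots, ‖z‖ = 1)
    (p : ℕ → Polynomial ℂ) (hp : ∀ n, IsOPA ω f n (p n)) :
    ∃ C : ℝ, 0 < C ∧ ∀ n : ℕ,
      (∑' k : ℕ, ‖((1 : Polynomial ℂ) - p n * f).coeff k‖) ≤ C := by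
  classical
  set s : Finset ℂ := ⟨f.roots, hsimple⟩ with hsdef
  have hmem : ∀ b, b ∈ s ↔ b ∈ f.roots := fun b => Iff.rfl
  have hcard : s.card = d := by
    have h1 : f.roots.card = f.natDegree :=
      (Polynomial.splits_iff_card_roots).1 (IsAlgClosed.splits f)
    simpa [hsdef, Finset.card, hdeg] using h1
  have hprod : ∏ b ∈ s, (Polynomial.X - Polynomial.C b) = f := by
    rw [Finset.prod_eq_multiset_prod]
    exact Polynomial.prod_multiset_X_sub_C_of_monic_of_roots_card_eq hmonic
      ((Polynomial.splits_iff_card_roots).1 (IsAlgClosed.splits f))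
  have hs : ∀ b ∈ s, 1 ≤ ‖b‖ := fun b hb => hnodisk b ((hmem b).1 hb)
  obtain ⟨M, hM1, hM⟩ := ratio_shift hω d
  obtain ⟨C0, hC00, hC0⟩ := residual_bound hω s hs (by omega : 0 < d) hcard
  have hdM : (0:ℝ) < 1 + d * M := by positivity
  refine ⟨Real.sqrt ((1 + d * M) * C0) + 1, by positivity, fun n => ?_⟩
  obtain ⟨R, hRdeg, hReval, hRsum⟩ := hC0 n
  -- divisibility : f ∣ 1 - R
  have hdvd : f ∣ (1 - R) := by
    rw [← hprod]
    apply prod_X_sub_C_dvd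
    intro b hb
    rw [Polynomial.eval_sub, Polynomial.eval_one, hReval b hb, sub_self]
  obtain ⟨q, hq⟩ := hdvd
  have hf0 : f ≠ 0 := hmonic.ne_zero
  have h1R : (1 : Polynomial ℂ) - q * f = R := by
    have : q * f = 1 - R := by rw [mul_comm, ← hq]
    rw [this]; ring
  have hqdeg : q.degree ≤ (n : ℕ) := by
    rcases eq_or_ne q 0 with hq0 | hq0
    · rw [hq0, Polynomial.degree_zero]; exact bot_le
    · have hnd : (f * q).natDegree = d + q.natDegree := by
        rw [Polynomial.natDegree_mul hf0 hq0, hdeg]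
      have h1 : (1 - R).natDegree ≤ n + d := by
        calc (1 - R).natDegree ≤ max (1 : Polynomial ℂ).natDegree R.natDegree :=
            Polynomial.natDegree_sub_le _ _
          _ ≤ n + d := by rw [Polynomial.natDegree_one]; omega
      have h2 : q.natDegree ≤ n := by rw [hq, hnd] at h1; omega
      calc q.degree ≤ (q.natDegree : WithBot ℕ) := Polynomial.degree_le_natDegree
        _ ≤ (n : WithBot ℕ) := by exact_mod_cast h2
  have hopa : wNormSq ω (1 - p n * f) ≤ wNormSq ω R := by
    have := (hp n).2 q hqdeg
    rwa [h1R] at this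
  set g : Polynomial ℂ := 1 - p n * f with hgdef
  have hgdeg : g.natDegree ≤ n + d := by
    have hpn : (p n).natDegree ≤ n := Polynomial.natDegree_le_iff_degree_le.2 (hp n).1
    have h1 : (p n * f).natDegree ≤ n + d := by
      calc (p n * f).natDegree ≤ (p n).natDegree + f.natDegree := Polynomial.natDegree_mul_le
        _ ≤ n + d := by omega
    calc g.natDegree ≤ max (1 : Polynomial ℂ).natDegree (p n * f).natDegree :=
        Polynomial.natDegree_sub_le _ _
      _ ≤ n + d := by rw [Polynomial.natDegree_one]; omega
  -- tsum is a finite sum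
  have htsum : (∑' k : ℕ, ‖g.coeff k‖)
      = ∑ k ∈ Finset.range (g.natDegree + 1), ‖g.coeff k‖ := by
    apply tsum_eq_sum
    intro k hk
    rw [Polynomial.coeff_eq_zero_of_natDegree_lt, norm_zero]
    have := Finset.mem_range.not.1 hk
    omega
  -- Cauchy-Schwarz
  have hCS : (∑ k ∈ Finset.range (g.natDegree + 1), ‖g.coeff k‖) ^ 2
      ≤ S ω g.natDegree * wNormSq ω g := by
    have hcs := Finset.sum_mul_sq_le_sq_mul_sq (Finset.range (g.natDegree + 1))
      (fun k => Real.sqrt (1 / ω k)) (fun k => Real.sqrt (ω k) * ‖g.coeff k‖)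
    have hL : ∀ k ∈ Finset.range (g.natDegree + 1),
        Real.sqrt (1 / ω k) * (Real.sqrt (ω k) * ‖g.coeff k‖)
          = ‖g.coeff k‖ := by
      intro k _
      have h1 := hω.1 k
      rw [← mul_assoc, ← Real.sqrt_mul (by positivity), one_div,
        inv_mul_cancel₀ (ne_of_gt h1), Real.sqrt_one, one_mul]
    have hR1 : ∀ k ∈ Finset.range (g.natDegree + 1),
        Real.sqrt (1 / ω k) ^ 2 = 1 / ω k := fun k _ =>
      Real.sq_sqrt (by have := hω.1 k; positivity)
    have hR2 : ∀ k ∈ Finset.range (g.natDegree + 1),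
        (Real.sqrt (ω k) * ‖g.coeff k‖) ^ 2
          = ω k * ‖g.coeff k‖ ^ 2 := by
      intro k _
      rw [mul_pow, Real.sq_sqrt (hω.1 k).le]
    rw [Finset.sum_congr rfl hL, Finset.sum_congr rfl hR1, Finset.sum_congr rfl hR2] at hcs
    exact hcs
  have hSg : S ω g.natDegree ≤ (1 + d * M) * S ω n := by
    calc S ω g.natDegree ≤ S ω (n + d) := S_mono hω hgdeg
      _ ≤ (1 + d * M) * S ω n := S_shift hω hM hM1 n
  have hwR : wNormSq ω R = wSum ω (n + d + 1) R := wNormSq_eq_wSum (by omega)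
  have hfinal : (∑ k ∈ Finset.range (g.natDegree + 1), ‖g.coeff k‖) ^ 2
      ≤ (1 + d * M) * C0 := by
    have hwg0 : 0 ≤ wNormSq ω g := by
      apply Finset.sum_nonneg; intro k _; have := hω.1 k; positivity
    have hS0 := S_pos hω g.natDegree
    have hSn0 := S_pos hω n
    calc (∑ k ∈ Finset.range (g.natDegree + 1), ‖g.coeff k‖) ^ 2
        ≤ S ω g.natDegree * wNormSq ω g := hCS
      _ ≤ ((1 + d * M) * S ω n) * wNormSq ω g := mul_le_mul_of_nonneg_right hSg hwg0
      _ ≤ ((1 + d * M) * S ω n) * wNormSq ω R := by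
          apply mul_le_mul_of_nonneg_left hopa
          positivity
      _ = (1 + d * M) * (wSum ω (n + d + 1) R * S ω n) := by rw [hwR]; ring
      _ ≤ (1 + d * M) * C0 := mul_le_mul_of_nonneg_left hRsum hdM.le
  rw [htsum]
  have hnn : 0 ≤ ∑ k ∈ Finset.range (g.natDegree + 1), ‖g.coeff k‖ :=
    Finset.sum_nonneg fun k _ => (norm_nonneg _)
  have : (∑ k ∈ Finset.range (g.natDegree + 1), ‖g.coeff k‖)
      ≤ Real.sqrt ((1 + d * M) * C0) :=
    (Real.le_sqrt hnn (by positivity)).2 hfinal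
  linarith

end
end

section
/- Let ω be a weight, f a monic polynomial of degree d with simple zeros z₁,…,z_d ∈ ℂ ∖ {0}, p_n the n-th optimal polynomial approximant to 1/f in H²_ω, and d_{k,n} = coeff_k(1 − p_n f). Let E be the d×d matrix with entries e_{l,m} = k_{n+d}(z_l, z_m) and v₀ = (1,…,1) ∈ ℂ^d. Then E is invertible and there is a unique vector A_n = (A_{1,n},…,A_{d,n}) ∈ ℂ^d such that d_{k,n} = (1/ω_k)·∑_{i=1}^d A_{i,n} z̄_i^k for every k = 0,…,n+d; moreover A_nᵗ = E⁻¹ · v₀ᵗ. -/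
open Polynomial Filter Topology MeasureTheory Metric Asymptotics

noncomputable section

namespace CFaux

/-- Weighted (truncated) inner product of two polynomials. -/
def sip (ω : ℕ → ℝ) (N : ℕ) (u v : Polynomial ℂ) : ℂ :=
  ∑ k ∈ Finset.range (N+1), (ω k : ℂ) * (u.coeff k * (starRingEnd ℂ) (v.coeff k))

lemma wNormSq_eq (ω : ℕ → ℝ) (N : ℕ) (u : Polynomial ℂ) (hu : u.natDegree ≤ N) :
    wNormSq ω u = ∑ k ∈ Finset.range (N+1), ω k * Complex.normSq (u.coeff k) := by
  unfold wNormSq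
  simp only [Complex.sq_norm]
  exact Finset.sum_subset (by intro k hk; simp only [Finset.mem_range] at *; omega)
    (fun k _ hk => by
      have : u.natDegree < k := by simp only [Finset.mem_range] at hk; omega
      simp [Polynomial.coeff_eq_zero_of_natDegree_lt this])

lemma sip_self (ω : ℕ → ℝ) (N : ℕ) (u : Polynomial ℂ) :
    sip ω N u u = ((∑ k ∈ Finset.range (N+1), ω k * Complex.normSq (u.coeff k) : ℝ) : ℂ) := by
  unfold sip
  push_cast
  exact Finset.sum_congr rfl fun k _ => by rw [Complex.mul_conj]

/-- Variational orthogonality relations for the optimal polynomial approximant. -/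
lemma orth (ω : ℕ → ℝ) (hωpos : ∀ k, 0 < ω k) (N : ℕ) (f pn : Polynomial ℂ) (n : ℕ)
    (hfd : n + f.natDegree ≤ N) (hopa : IsOPA ω f n pn)
    (q : Polynomial ℂ) (hq : q.degree ≤ (n : ℕ)) :
    sip ω N (1 - pn * f) (q * f) = 0 := by
  set h : Polynomial ℂ := 1 - pn * f with hh
  set u : Polynomial ℂ := q * f with hu
  have hpdeg : pn.natDegree ≤ n := natDegree_le_iff_degree_le.2 hopa.1
  have hqdeg : q.natDegree ≤ n := natDegree_le_iff_degree_le.2 hq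
  have hhdeg : h.natDegree ≤ N := by
    refine le_trans (natDegree_sub_le _ _) ?_
    simp only [natDegree_one]
    have := natDegree_mul_le (p := pn) (q := f)
    omega
  have hudeg : u.natDegree ≤ N := by
    rw [hu]
    exact le_trans natDegree_mul_le (by omega)
  set S : ℂ := sip ω N h u with hS
  set Bre : ℝ := ∑ k ∈ Finset.range (N+1), ω k * Complex.normSq (u.coeff k) with hBre
  have hBnn : 0 ≤ Bre := Finset.sum_nonneg fun k _ =>
    mul_nonneg (hωpos k).le (Complex.normSq_nonneg _)
  have key : ∀ t : ℂ, 2 * ((starRingEnd ℂ) t * S).re ≤ Complex.normSq t * Bre := by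
    intro t
    have hdq : (pn + Polynomial.C t * q).degree ≤ (n : ℕ) := by
      refine le_trans (degree_add_le _ _) (max_le hopa.1 ?_)
      exact le_trans (degree_mul_le _ _) (by
        simpa using add_le_add (degree_C_le (a := t)) hq)
    have hle := hopa.2 _ hdq
    have hpoly : 1 - (pn + Polynomial.C t * q) * f = h - Polynomial.C t * u := by
      rw [hh, hu]; ring
    rw [hpoly] at hle
    have hdeg2 : (h - Polynomial.C t * u).natDegree ≤ N := by
      refine le_trans (natDegree_sub_le _ _) (max_le hhdeg ?_)
      exact le_trans (natDegree_mul_le) (by simp [natDegree_C]; omega)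
    rw [wNormSq_eq ω N _ hhdeg, wNormSq_eq ω N _ hdeg2] at hle
    have expand : ∑ k ∈ Finset.range (N+1), ω k * Complex.normSq ((h - Polynomial.C t * u).coeff k)
        = (∑ k ∈ Finset.range (N+1), ω k * Complex.normSq (h.coeff k))
          + Complex.normSq t * Bre - 2 * ((starRingEnd ℂ) t * S).re := by
      rw [hBre, hS]
      unfold sip
      rw [Finset.mul_sum, Finset.mul_sum, Complex.re_sum, Finset.mul_sum, ← Finset.sum_add_distrib,
        ← Finset.sum_sub_distrib]
      refine Finset.sum_congr rfl fun k _ => ?_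
      simp only [coeff_sub, coeff_C_mul]
      simp only [Complex.normSq_apply, Complex.mul_re, Complex.mul_im, Complex.sub_re,
        Complex.sub_im, Complex.conj_re, Complex.conj_im, Complex.ofReal_re, Complex.ofReal_im]
      ring
    rw [expand] at hle
    linarith
  by_contra hS0
  have hnsS : 0 < Complex.normSq S := Complex.normSq_pos.2 hS0
  set ε : ℝ := 1 / (Bre + 1) with hε
  have hεpos : 0 < ε := by positivity
  have := key ((ε : ℂ) * S)
  rw [map_mul, Complex.conj_ofReal] at this
  have h1 : ((ε : ℂ) * ((starRingEnd ℂ) S) * S).re = ε * Complex.normSq S := by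
    rw [mul_assoc, mul_comm ((starRingEnd ℂ) S) S, Complex.mul_conj]
    simp [← Complex.ofReal_mul]
  have h2 : Complex.normSq ((ε:ℂ) * S) = ε^2 * Complex.normSq S := by
    rw [Complex.normSq_mul, Complex.normSq_ofReal]; ring
  rw [h1, h2] at this
  have hεB : ε * Bre < 1 := by
    rw [hε, div_mul_eq_mul_div, div_lt_one (by linarith)]; linarith
  nlinarith [mul_pos hεpos hnsS, mul_lt_mul_of_pos_left hεB (mul_pos hεpos hnsS)]

/-- The kernel matrix is nonsingular. -/
lemma Edet (ω : ℕ → ℝ) (hωpos : ∀ k, 0 < ω k) (d N : ℕ) (hdN : d ≤ N + 1)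
    (v : Fin d → ℂ) (hv : Function.Injective v)
    (E : Matrix (Fin d) (Fin d) ℂ)
    (hE : ∀ l m, E l m =
      ∑ k ∈ Finset.range (N+1), (starRingEnd ℂ) (v m) ^ k * (v l) ^ k / (ω k : ℂ)) :
    E.det ≠ 0 := by
  intro h0
  obtain ⟨x, hx0, hEx⟩ := Matrix.exists_mulVec_eq_zero_iff.2 h0
  set c : ℕ → ℂ := fun k => ∑ m, x m * (starRingEnd ℂ) (v m) ^ k with hc
  have hconj : ∀ k, (starRingEnd ℂ) (c k) = ∑ l, (starRingEnd ℂ) (x l) * (v l) ^ k := by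
    intro k
    rw [hc, map_sum]
    exact Finset.sum_congr rfl fun l _ => by
      rw [map_mul, map_pow, Complex.conj_conj]
  have h1 : ∀ l, E.mulVec x l = ∑ k ∈ Finset.range (N+1), v l ^ k / (ω k : ℂ) * c k := by
    intro l
    simp only [Matrix.mulVec, dotProduct, hE, Finset.sum_mul]
    rw [Finset.sum_comm]
    refine Finset.sum_congr rfl fun k _ => ?_
    rw [hc, Finset.mul_sum]
    exact Finset.sum_congr rfl fun m _ => by ring
  have h2 : (0:ℂ) = ∑ k ∈ Finset.range (N+1),
      (((1 / ω k) * Complex.normSq (c k) : ℝ) : ℂ) := by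
    have hL : ∑ l, (starRingEnd ℂ) (x l) * E.mulVec x l = 0 := by
      rw [hEx]; simp
    rw [← hL]
    simp only [h1, Finset.mul_sum]
    rw [Finset.sum_comm]
    refine Finset.sum_congr rfl fun k _ => ?_
    have : ∑ l, (starRingEnd ℂ) (x l) * (v l ^ k / (ω k : ℂ) * c k)
        = (∑ l, (starRingEnd ℂ) (x l) * v l ^ k) * (c k / (ω k : ℂ)) := by
      rw [Finset.sum_mul]
      exact Finset.sum_congr rfl fun l _ => by ring
    rw [this, ← hconj, mul_comm, div_mul_eq_mul_div, Complex.mul_conj]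
    push_cast
    ring
  have h3 : ∀ k ∈ Finset.range (N+1), c k = 0 := by
    have hre : (0:ℝ) = ∑ k ∈ Finset.range (N+1), (1 / ω k) * Complex.normSq (c k) := by
      have := congrArg Complex.re h2
      simpa [Complex.re_sum] using this
    intro k hk
    have hterm := (Finset.sum_eq_zero_iff_of_nonneg (fun j _ =>
      mul_nonneg (one_div_nonneg.2 (hωpos j).le) (Complex.normSq_nonneg _))).1 hre.symm k hk
    have : Complex.normSq (c k) = 0 := by
      have h1ω : (0:ℝ) < 1 / ω k := by have := hωpos k; positivity
      exact (mul_eq_zero.1 hterm).resolve_left (ne_of_gt h1ω)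
    exact Complex.normSq_eq_zero.1 this
  apply hx0
  refine Matrix.eq_zero_of_forall_pow_sum_mul_pow_eq_zero
    (f := fun i => (starRingEnd ℂ) (v i)) (fun a b hab => hv ((starRingEnd ℂ).injective hab)) ?_
  intro i
  exact h3 (i : ℕ) (Finset.mem_range.2 (by omega))

end CFaux

/-- Closed formula for the coefficients of `1 - p_n f`. -/
theorem coefficients_formula
    (ω : ℕ → ℝ) (hω : IsWeight ω) (d : ℕ) (hd : 1 ≤ d)
    (z : ℕ → ℂ) (hinj : Set.InjOn z (Set.Icc 1 d))
    (hz : ∀ i, 1 ≤ i → i ≤ d → z i ≠ 0)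
    (f : Polynomial ℂ)
    (hf : f = ∏ i ∈ Finset.Icc 1 d, (Polynomial.X - Polynomial.C (z i)))
    (p : ℕ → Polynomial ℂ) (hp : ∀ n, IsOPA ω f n (p n)) (n : ℕ)
    (E : Matrix (Fin d) (Fin d) ℂ)
    (hE : E = Matrix.of fun (l m : Fin d) => kN ω (n + d) (z ((l : ℕ) + 1)) (z ((m : ℕ) + 1))) :
    IsUnit E.det ∧
    (∀ k ≤ n + d, ((1 : Polynomial ℂ) - p n * f).coeff k =
      (1 / (ω k : ℂ)) *
        ∑ i : Fin d, (E⁻¹.mulVec (fun _ => 1)) i * (starRingEnd ℂ (z ((i : ℕ) + 1))) ^ k) ∧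
    (∀ A : Fin d → ℂ,
      (∀ k ≤ n + d, ((1 : Polynomial ℂ) - p n * f).coeff k =
        (1 / (ω k : ℂ)) * ∑ i : Fin d, A i * (starRingEnd ℂ (z ((i : ℕ) + 1))) ^ k) →
      A = E⁻¹.mulVec (fun _ => 1)) := by
  obtain ⟨hωpos, -⟩ := hω
  have hvinj : Function.Injective (fun i : Fin d => z ((i : ℕ) + 1)) := by
    intro a b hab
    have h1 : ((a:ℕ)+1) ∈ Set.Icc 1 d := Set.mem_Icc.2 ⟨by omega, by have := a.isLt; omega⟩
    have h2 : ((b:ℕ)+1) ∈ Set.Icc 1 d := Set.mem_Icc.2 ⟨by omega, by have := b.isLt; omega⟩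
    have := hinj h1 h2 hab
    exact Fin.ext (by omega)
  have hfC : ∀ i ∈ Finset.Icc 1 d, f.eval (z i) = 0 := by
    intro i hi
    rw [hf, eval_prod]
    exact Finset.prod_eq_zero hi (by simp)
  have hfmonic : f.Monic := hf ▸ monic_prod_of_monic _ _ (fun i _ => monic_X_sub_C _)
  have hfne : f ≠ 0 := hfmonic.ne_zero
  have hfdeg : f.natDegree = d := by
    rw [hf, natDegree_prod _ _ (fun i _ => X_sub_C_ne_zero _)]
    simp only [natDegree_X_sub_C]
    rw [Finset.sum_const, smul_eq_mul, mul_one, Nat.card_Icc]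
    omega
  have hpdeg : (p n).natDegree ≤ n := natDegree_le_iff_degree_le.2 (hp n).1
  have hhdeg : ((1 : Polynomial ℂ) - p n * f).natDegree ≤ n + d := by
    refine le_trans (natDegree_sub_le _ _) ?_
    simp only [natDegree_one]
    have := natDegree_mul_le (p := p n) (q := f)
    omega
  have hEentry : ∀ l m : Fin d, E l m =
      ∑ k ∈ Finset.range (n + d + 1),
        (starRingEnd ℂ) (z ((m:ℕ)+1)) ^ k * (z ((l:ℕ)+1)) ^ k / (ω k : ℂ) := by
    intro l m; rw [hE]; rfl
  have hEdet : E.det ≠ 0 :=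
    CFaux.Edet ω hωpos d (n + d) (by omega) _ hvinj E hEentry
  have hEunit : IsUnit E.det := hEdet.isUnit
  set A : Fin d → ℂ := E⁻¹.mulVec (fun _ => 1) with hA
  have hEA : E.mulVec A = fun _ => 1 := by
    rw [hA, Matrix.mulVec_mulVec, Matrix.mul_nonsing_inv _ hEunit, Matrix.one_mulVec]
  set g : ℕ → ℂ := fun k =>
    (1 / (ω k : ℂ)) * ∑ i : Fin d, A i * (starRingEnd ℂ) (z ((i:ℕ)+1)) ^ k with hg
  set G : Polynomial ℂ := ∑ k ∈ Finset.range (n + d + 1), Polynomial.C (g k) * X ^ k with hG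
  have hGcoeff : ∀ j, G.coeff j = if j ∈ Finset.range (n + d + 1) then g j else 0 := by
    intro j
    rw [hG, finset_sum_coeff]
    simp only [coeff_C_mul, coeff_X_pow, mul_ite, mul_one, mul_zero]
    exact Finset.sum_ite_eq (Finset.range (n + d + 1)) j g
  have hGdeg : G.natDegree ≤ n + d := by
    refine natDegree_le_iff_coeff_eq_zero.2 fun j hj => ?_
    rw [hGcoeff j, if_neg (by simp; omega)]
  have hGeval : ∀ l : Fin d, G.eval (z ((l:ℕ)+1)) = 1 := by
    intro l
    have hswap : E.mulVec A l = ∑ k ∈ Finset.range (n + d + 1), g k * z ((l:ℕ)+1) ^ k := by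
      simp only [Matrix.mulVec, dotProduct, hEentry, Finset.sum_mul]
      rw [Finset.sum_comm]
      refine Finset.sum_congr rfl fun k _ => ?_
      simp only [hg]
      rw [Finset.mul_sum, Finset.sum_mul]
      exact Finset.sum_congr rfl fun m _ => by ring
    rw [hG, eval_finset_sum]
    simp only [eval_mul, eval_C, eval_pow, eval_X]
    rw [← hswap, hEA]
  have hGroot : ∀ i ∈ Finset.Icc 1 d, ((1 : Polynomial ℂ) - p n * f - G).IsRoot (z i) := by
    intro i hi
    have hi' := Finset.mem_Icc.1 hi
    have hl : i - 1 < d := by omega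
    have hGi : G.eval (z i) = 1 := by
      have := hGeval ⟨i - 1, hl⟩
      simpa only [show i - 1 + 1 = i by omega] using this
    unfold IsRoot
    rw [eval_sub, eval_sub, eval_one, eval_mul, hfC i hi, hGi]
    ring
  have hdvd : f ∣ ((1 : Polynomial ℂ) - p n * f - G) := by
    nth_rewrite 1 [hf]
    refine Finset.prod_dvd_of_coprime ?_ fun i hi => dvd_iff_isRoot.2 (hGroot i hi)
    intro a ha b hb hab
    refine isCoprime_X_sub_C_of_isUnit_sub (sub_ne_zero.2 fun e => hab ?_).isUnit
    rw [Finset.coe_Icc] at ha hb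
    exact hinj ha hb e
  obtain ⟨r, hr⟩ := hdvd
  -- main coefficient identity
  have main : ∀ k ≤ n + d, ((1 : Polynomial ℂ) - p n * f).coeff k = g k := by
    by_cases hδ0 : (1 : Polynomial ℂ) - p n * f - G = 0
    · intro k hk
      have : (1 : Polynomial ℂ) - p n * f = G := by
        have := sub_eq_zero.1 hδ0; exact this
      rw [this, hGcoeff k, if_pos (Finset.mem_range.2 (by omega))]
    · have hr0 : r ≠ 0 := by
        intro h0; rw [h0, mul_zero] at hr; exact hδ0 hr
      have hδdeg : ((1 : Polynomial ℂ) - p n * f - G).natDegree ≤ n + d :=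
        le_trans (natDegree_sub_le _ _) (max_le hhdeg hGdeg)
      have hrdeg : r.degree ≤ (n : ℕ) := by
        have := natDegree_mul hfne hr0
        rw [← hr] at this
        have hrn : r.natDegree ≤ n := by omega
        exact le_trans degree_le_natDegree (by exact_mod_cast Nat.cast_le.2 hrn)
      have horth : CFaux.sip ω (n + d) ((1 : Polynomial ℂ) - p n * f) (r * f) = 0 :=
        CFaux.orth ω hωpos (n + d) f (p n) n (by omega) (hp n) r hrdeg
      have hudeg : (r * f).natDegree ≤ n + d := by
        refine le_trans natDegree_mul_le ?_
        have : r.natDegree ≤ n := natDegree_le_iff_degree_le.2 hrdeg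
        omega
      have hueval : ∀ i ∈ Finset.Icc 1 d, (r * f).eval (z i) = 0 := fun i hi => by
        rw [eval_mul, hfC i hi, mul_zero]
      have hsipG : CFaux.sip ω (n + d) G (r * f) = 0 := by
        unfold CFaux.sip
        have step1 : ∀ k ∈ Finset.range (n + d + 1),
            (ω k : ℂ) * (G.coeff k * (starRingEnd ℂ) ((r * f).coeff k))
            = ∑ i : Fin d, A i * (starRingEnd ℂ) (z ((i:ℕ)+1)) ^ k
                * (starRingEnd ℂ) ((r * f).coeff k) := by
          intro k hk
          rw [hGcoeff k, if_pos hk]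
          simp only [hg]
          rw [show ∑ i : Fin d, A i * (starRingEnd ℂ) (z ((i:ℕ)+1)) ^ k
                * (starRingEnd ℂ) ((r * f).coeff k)
              = (∑ i : Fin d, A i * (starRingEnd ℂ) (z ((i:ℕ)+1)) ^ k)

                * (starRingEnd ℂ) ((r * f).coeff k) from (Finset.sum_mul _ _ _).symm]
          have hωne : (ω k : ℂ) ≠ 0 := Complex.ofReal_ne_zero.2 (hωpos k).ne'
          field_simp
        rw [Finset.sum_congr rfl step1, Finset.sum_comm]
        refine Finset.sum_eq_zero fun i _ => ?_
        have heval : (r * f).eval (z ((i:ℕ)+1)) = 0 :=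
          hueval _ (Finset.mem_Icc.2 ⟨by omega, by have := i.isLt; omega⟩)
        have : ∑ k ∈ Finset.range (n + d + 1),
            A i * (starRingEnd ℂ) (z ((i:ℕ)+1)) ^ k * (starRingEnd ℂ) ((r * f).coeff k)
            = A i * (starRingEnd ℂ) ((r * f).eval (z ((i:ℕ)+1))) := by
          rw [eval_eq_sum_range' (lt_of_le_of_lt hudeg (Nat.lt_succ_self _)), map_sum,
            Finset.mul_sum]
          refine Finset.sum_congr rfl fun k _ => ?_
          rw [map_mul, map_pow]
          ring
        rw [this, heval, map_zero, mul_zero]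
      have hsipδ : CFaux.sip ω (n + d) ((1 : Polynomial ℂ) - p n * f - G)
          ((1 : Polynomial ℂ) - p n * f - G) = 0 := by
        nth_rewrite 2 [hr]
        have hlin : CFaux.sip ω (n + d) ((1 : Polynomial ℂ) - p n * f - G) (f * r)
            = CFaux.sip ω (n + d) ((1 : Polynomial ℂ) - p n * f) (f * r)
              - CFaux.sip ω (n + d) G (f * r) := by
          unfold CFaux.sip
          rw [← Finset.sum_sub_distrib]
          refine Finset.sum_congr rfl fun k _ => ?_
          simp only [coeff_sub]
          ring
        rw [hlin, mul_comm f r, horth, hsipG, sub_zero]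
      rw [CFaux.sip_self] at hsipδ
      have hre : ∑ k ∈ Finset.range (n + d + 1),
          ω k * Complex.normSq (((1 : Polynomial ℂ) - p n * f - G).coeff k) = 0 := by
        exact_mod_cast hsipδ
      intro k hk
      have hterm := (Finset.sum_eq_zero_iff_of_nonneg (fun j _ =>
        mul_nonneg (hωpos j).le (Complex.normSq_nonneg _))).1 hre k
        (Finset.mem_range.2 (by omega))
      have hcoe : ((1 : Polynomial ℂ) - p n * f - G).coeff k = 0 := by
        have := (mul_eq_zero.1 hterm).resolve_left (hωpos k).ne'
        exact Complex.normSq_eq_zero.1 this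
      have h5 : ((1 : Polynomial ℂ) - p n * f).coeff k = G.coeff k :=
        sub_eq_zero.1 (by rw [← coeff_sub]; exact hcoe)
      rw [h5, hGcoeff k, if_pos (Finset.mem_range.2 (by omega))]
  refine ⟨hEunit, fun k hk => by rw [main k hk], fun A' hA' => ?_⟩
  have hdiff : ∀ i : Fin d, ∑ j : Fin d,
      (A' j - A j) * (starRingEnd ℂ) (z ((j:ℕ)+1)) ^ (i : ℕ) = 0 := by
    intro i
    have hik : (i : ℕ) ≤ n + d := by have := i.isLt; omega
    have e1 := hA' (i : ℕ) hik
    have e2 := main (i : ℕ) hik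
    have hωne : (1 / (ω (i:ℕ) : ℂ)) ≠ 0 := by
      simp only [ne_eq, one_div, inv_eq_zero, Complex.ofReal_eq_zero]
      exact (hωpos _).ne'
    have heq : (1 / (ω (i:ℕ) : ℂ)) * ∑ j : Fin d, A' j * (starRingEnd ℂ) (z ((j:ℕ)+1)) ^ (i:ℕ)
        = (1 / (ω (i:ℕ) : ℂ)) * ∑ j : Fin d, A j * (starRingEnd ℂ) (z ((j:ℕ)+1)) ^ (i:ℕ) := by
      rw [← e1, e2]
    have : ∑ j : Fin d, A' j * (starRingEnd ℂ) (z ((j:ℕ)+1)) ^ (i:ℕ)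
        = ∑ j : Fin d, A j * (starRingEnd ℂ) (z ((j:ℕ)+1)) ^ (i:ℕ) :=
      mul_left_cancel₀ hωne heq
    rw [← sub_eq_zero] at this
    rw [← Finset.sum_sub_distrib] at this
    rw [← this]
    exact Finset.sum_congr rfl fun j _ => by ring
  have hzero : A' - A = 0 :=
    Matrix.eq_zero_of_forall_pow_sum_mul_pow_eq_zero
      (f := fun i : Fin d => (starRingEnd ℂ) (z ((i:ℕ)+1)))
      (fun a b hab => hvinj ((starRingEnd ℂ).injective hab)) (fun i => by
        simpa [Pi.sub_apply] using hdiff i)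
  exact sub_eq_zero.1 hzero

end
end

section
/- Let ω be a weight and let z ∈ ℂ with |z| > 1. Define C(N,z) = (ω_N / z^{N+1}) · ∑_{k=0}^N z^k/ω_k, so that ∑_{k=0}^N z^k/ω_k = C(N,z)·z^{N+1}/ω_N. Then C(N,z) → 1/(z−1) as N → ∞. -/
open Polynomial Filter Topology MeasureTheory Metric Asymptotics

noncomputable section

section Aux

lemma weight_growth (ω : ℕ → ℝ) (hpos : ∀ k, 0 < ω k) (hmono : Monotone ω ∨ Antitone ω)
    (h0 : ω 0 = 1)
    (hlim : Filter.Tendsto (fun n => ω n / ω (n - Nat.sqrt n)) Filter.atTop (nhds 1))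
    (c : ℝ) (hc : 1 < c) :
    ∃ M : ℝ, 1 ≤ M ∧ ∀ N j, j ≤ N → ω N ≤ M * c ^ j * ω (N - j) := by
  have hc0 : (0:ℝ) < c := lt_trans one_pos hc
  rcases hmono with hm | ha
  swap
  · refine ⟨1, le_refl _, fun N j hj => ?_⟩
    have h1 : ω N ≤ ω (N - j) := ha (Nat.sub_le N j)
    calc ω N ≤ ω (N - j) := h1
      _ = 1 * 1 * ω (N - j) := by ring
      _ ≤ 1 * c ^ j * ω (N - j) := by gcongr <;> first | positivity | exact (hpos _).le | exact one_le_pow₀ hc.le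
  · have hev : ∀ᶠ n in atTop, ω n / ω (n - Nat.sqrt n) ≤ c :=
      hlim.eventually_le_const hc
    obtain ⟨n₀, hn₀⟩ := (hev.and (eventually_ge_atTop 1)).exists_forall_of_atTop
    have hM1 : (1:ℝ) ≤ ω n₀ := by rw [← h0]; exact hm (Nat.zero_le _)
    refine ⟨ω n₀, hM1, ?_⟩
    intro N
    induction N using Nat.strong_induction_on with
    | _ N IH =>
      intro j hj
      have hone : (1:ℝ) ≤ ω (N - j) := by rw [← h0]; exact hm (Nat.zero_le _)
      have hcj : (1:ℝ) ≤ c ^ j := one_le_pow₀ hc.le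
      rcases le_or_gt N n₀ with hN | hN
      · calc ω N ≤ ω n₀ := hm hN
          _ = ω n₀ * 1 * 1 := by ring
          _ ≤ ω n₀ * c ^ j * ω (N - j) := by gcongr <;> linarith
      · rcases Nat.eq_zero_or_pos j with rfl | hj1
        · simp only [pow_zero, mul_one, Nat.sub_zero]
          calc ω N = 1 * ω N := (one_mul _).symm
            _ ≤ ω n₀ * ω N := by gcongr <;> first | positivity | exact (hpos _).le | linarith
        · have hstep := (hn₀ N hN.le).1
          set s := Nat.sqrt N with hs
          have hs1 : 1 ≤ s := Nat.le_sqrt.2 (by nlinarith [(hn₀ N hN.le).2])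
          have hωs : ω N ≤ c * ω (N - s) := by
            rw [div_le_iff₀ (hpos _)] at hstep; linarith
          rcases le_or_gt j s with hjs | hsj
          · have hcc : c ≤ c ^ j := by
              calc c = c ^ 1 := (pow_one c).symm
                _ ≤ c ^ j := pow_le_pow_right₀ hc.le hj1
            calc ω N ≤ c * ω (N - s) := hωs
              _ ≤ c * ω (N - j) := by
                  gcongr <;> first | positivity | exact (hpos _).le | exact hm (by omega)
              _ ≤ (ω n₀ * c ^ j) * ω (N - j) := by
                  have hkey : c ≤ ω n₀ * c ^ j := by nlinarith
                  gcongr <;> first | positivity | exact (hpos _).le | exact hkey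
          · have hNs : N - s < N := by omega
            have hIH := IH (N - s) hNs (j - s) (by omega)
            rw [show N - s - (j - s) = N - j by omega] at hIH
            calc ω N ≤ c * ω (N - s) := hωs
              _ ≤ c * (ω n₀ * c ^ (j - s) * ω (N - j)) := by
                  gcongr <;> positivity
              _ = ω n₀ * c ^ (j - s + 1) * ω (N - j) := by ring
              _ ≤ ω n₀ * c ^ j * ω (N - j) := by
                  have hcs : c ^ (j - s + 1) ≤ c ^ j := pow_le_pow_right₀ hc.le (by omega)
                  gcongr <;> first | positivity | exact (hpos _).le | exact hcs

lemma weight_ratio_tendsto (ω : ℕ → ℝ) (hpos : ∀ k, 0 < ω k) (hmono : Monotone ω ∨ Antitone ω)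
    (hlim : Filter.Tendsto (fun n => ω n / ω (n - Nat.sqrt n)) Filter.atTop (nhds 1))
    (j : ℕ) : Filter.Tendsto (fun N => ω N / ω (N - j)) Filter.atTop (nhds 1) := by
  have hev : ∀ᶠ N in atTop, j ≤ Nat.sqrt N := by
    filter_upwards [eventually_ge_atTop (j * j)] with N hN
    exact Nat.le_sqrt.2 hN
  rcases hmono with hm | ha
  · refine tendsto_of_tendsto_of_tendsto_of_le_of_le' tendsto_const_nhds hlim ?_ ?_
    · filter_upwards with N
      exact (one_le_div (hpos _)).2 (hm (Nat.sub_le N j))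
    · filter_upwards [hev] with N hN
      exact div_le_div_of_nonneg_left (hpos N).le (hpos _) (hm (by omega))
  · refine tendsto_of_tendsto_of_tendsto_of_le_of_le' hlim tendsto_const_nhds ?_ ?_
    · filter_upwards [hev] with N hN
      exact div_le_div_of_nonneg_left (hpos N).le (hpos _) (ha (by omega))
    · filter_upwards with N
      exact (div_le_one (hpos _)).2 (ha (Nat.sub_le N j))

end Aux

/-- Asymptotics of partial sums of `z^k/ω_k` for `|z| > 1`. -/
theorem kernel_asymptotics (ω : ℕ → ℝ) (hω : IsWeight ω) (z : ℂ)
    (hz : 1 < ‖z‖) :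
    Filter.Tendsto
      (fun N => ((ω N : ℂ) / z ^ (N + 1)) * ∑ k ∈ Finset.range (N + 1), z ^ k / (ω k : ℂ))
      Filter.atTop (nhds (1 / (z - 1))) := by
  obtain ⟨hpos, hmono, h0, hlim, -⟩ := hω
  obtain ⟨c, hc1, hcA⟩ : ∃ c : ℝ, 1 < c ∧ c < ‖z‖ :=
    ⟨(‖z‖ + 1) / 2, by linarith, by linarith⟩
  obtain ⟨M, hM1, hMb⟩ := weight_growth ω hpos hmono h0 hlim c hc1
  have ratio : ∀ j, Filter.Tendsto (fun N => ω N / ω (N - j)) Filter.atTop (nhds 1) :=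
    weight_ratio_tendsto ω hpos hmono hlim
  have hz0 : z ≠ 0 := by
    intro h; rw [h, norm_zero] at hz; linarith
  have hA1 : (1:ℝ) < ‖z‖ := hz
  have hωC : ∀ k, (ω k : ℂ) ≠ 0 := fun k => Complex.ofReal_ne_zero.2 (hpos k).ne'
  set f : ℕ → ℕ → ℂ := fun N j =>
    if j ≤ N then ((ω N / ω (N - j) : ℝ) : ℂ) * (z⁻¹) ^ (j + 1) else 0 with hf
  have key : Filter.Tendsto (fun N => ∑' j, f N j) Filter.atTop
      (nhds (∑' j : ℕ, (z⁻¹) ^ (j + 1))) := by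
    apply tendsto_tsum_of_dominated_convergence
      (bound := fun j => M * (c / ‖z‖) ^ j)
    · apply Summable.mul_left
      exact summable_geometric_of_lt_one (by positivity) (by
        rw [div_lt_one (by linarith)]; exact hcA)
    · intro j
      have h1 : Filter.Tendsto (fun N => ((ω N / ω (N - j) : ℝ) : ℂ) * (z⁻¹) ^ (j + 1))
          Filter.atTop (nhds ((z⁻¹) ^ (j + 1))) := by
        have := ((Complex.continuous_ofReal.tendsto 1).comp (ratio j)).mul_const
          ((z⁻¹) ^ (j + 1))
        simpa using this
      refine h1.congr' ?_
      filter_upwards [eventually_ge_atTop j] with N hN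
      simp [hf, hN]
    · filter_upwards with N j
      by_cases hjN : j ≤ N
      · have hr0 : 0 < ω N / ω (N - j) := div_pos (hpos _) (hpos _)
        have hnorm : ‖f N j‖ = (ω N / ω (N - j)) * (‖z‖)⁻¹ ^ (j + 1) := by
          simp [hf, hjN, abs_of_pos (hpos N), abs_of_pos (hpos (N - j)), norm_pow, norm_inv]
        rw [hnorm]
        have h2 : ω N / ω (N - j) ≤ M * c ^ j :=
          (div_le_iff₀ (hpos _)).2 (hMb N j hjN)
        have h3 : (‖z‖)⁻¹ ^ (j + 1) ≤ (‖z‖)⁻¹ ^ j := by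
          apply pow_le_pow_of_le_one (by positivity) _ (by omega)
          rw [inv_le_one_iff₀]; right; linarith
        calc ω N / ω (N - j) * (‖z‖)⁻¹ ^ (j + 1)
            ≤ (M * c ^ j) * (‖z‖)⁻¹ ^ j := by
              apply mul_le_mul h2 h3 (by positivity) (by positivity)
          _ = M * (c / ‖z‖) ^ j := by
              rw [div_pow, inv_pow]; ring

      · simp only [hf, if_neg hjN, norm_zero]
        positivity
  have hgeo : (∑' j : ℕ, (z⁻¹) ^ (j + 1)) = 1 / (z - 1) := by
    have hnz : ‖z⁻¹‖ < 1 := by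
      rw [norm_inv, inv_lt_one_iff₀]; right; exact hz
    have h4 : (∑' j : ℕ, (z⁻¹) ^ (j + 1)) = (∑' j : ℕ, (z⁻¹) ^ j) * z⁻¹ := by
      rw [← tsum_mul_right]; simp [pow_succ]
    rw [h4, tsum_geometric_of_norm_lt_one hnz]
    have hz1 : z - 1 ≠ 0 := by
      intro h
      have : z = 1 := by linear_combination h
      rw [this] at hz; simp at hz
    field_simp
  rw [← hgeo]
  refine key.congr fun N => ?_
  rw [tsum_eq_sum (s := Finset.range (N + 1)) (by
    intro j hj
    simp only [Finset.mem_range, not_lt] at hj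
    exact if_neg (by omega))]
  rw [Finset.mul_sum, ← Finset.sum_range_reflect]
  apply Finset.sum_congr rfl
  intro j hj
  simp only [Finset.mem_range] at hj
  have hjN : j ≤ N := by omega
  simp only [hf, Nat.add_sub_cancel, if_pos (Nat.sub_le N j),
    show N - (N - j) = j by omega]
  have hsplit : z ^ (N + 1) = z ^ j * z ^ (N - j + 1) := by
    rw [← pow_add]; congr 1; omega
  rw [inv_pow, hsplit]
  push_cast
  field_simp [hωC j, hz0]

end
end

section
/- Let ω be a weight and let z₁, z₂ ∈ closure(𝔻) with z₁ ≠ z₂. Then k_n(z₁,z₂)/S_n → 0 as n → ∞, where k_n(z₁,z₂) = ∑_{k=0}^n z̄₂^k z₁^k/ω_k and S_n = ∑_{k=0}^n 1/ω_k. -/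
open Polynomial Filter Topology MeasureTheory Metric Asymptotics

noncomputable section

/-- Bound on partial geometric sums for `‖a‖ ≤ 1`, `a ≠ 1`. -/
lemma geom_partial_bound (a : ℂ) (ha : ‖a‖ ≤ 1) (hne : a ≠ 1) (m : ℕ) :
    ‖∑ j ∈ Finset.range m, a ^ j‖ ≤ 2 / ‖a - 1‖ := by
  have hpos : (0:ℝ) < ‖a - 1‖ := norm_pos_iff.mpr (sub_ne_zero.mpr hne)
  rw [geom_sum_eq hne, norm_div]
  gcongr
  calc ‖a ^ m - 1‖ ≤ ‖a ^ m‖ + ‖(1:ℂ)‖ := norm_sub_le _ _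
    _ ≤ 1 + 1 := by
        rw [norm_pow, norm_one]
        exact add_le_add (pow_le_one₀ (norm_nonneg a) ha) le_rfl
    _ = 2 := by norm_num

/-- Abel-summation bound for `∑ cₖ aᵏ` with monotone nonnegative `c`. -/
lemma abel_bound (a : ℂ) (ha : ‖a‖ ≤ 1) (hne : a ≠ 1) (c : ℕ → ℝ)
    (hc : ∀ k, 0 ≤ c k) (hmono : Monotone c ∨ Antitone c) (n : ℕ) :
    ‖∑ k ∈ Finset.range (n + 1), (c k : ℂ) * a ^ k‖ ≤ 2 / ‖a - 1‖ * (c 0 + 2 * c n) := by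
  have hM : (0:ℝ) ≤ 2 / ‖a - 1‖ := by positivity
  have hby := Finset.sum_range_by_parts (fun k => (c k : ℂ)) (fun k => a ^ k) (n + 1)
  simp only [smul_eq_mul, Nat.add_sub_cancel] at hby
  rw [hby]
  have h1 : ‖(c n : ℂ) * ∑ i ∈ Finset.range (n + 1), a ^ i‖ ≤ 2 / ‖a - 1‖ * c n := by
    rw [norm_mul, Complex.norm_real, Real.norm_of_nonneg (hc n), mul_comm]
    exact mul_le_mul_of_nonneg_right (geom_partial_bound a ha hne _) (hc n)
  have h2 : ‖∑ i ∈ Finset.range n, ((c (i+1) : ℂ) - (c i : ℂ)) * ∑ j ∈ Finset.range (i+1), a ^ j‖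
      ≤ 2 / ‖a - 1‖ * (c 0 + c n) := by
    calc ‖∑ i ∈ Finset.range n, ((c (i+1) : ℂ) - (c i : ℂ)) * ∑ j ∈ Finset.range (i+1), a ^ j‖
        ≤ ∑ i ∈ Finset.range n, ‖((c (i+1) : ℂ) - (c i : ℂ)) * ∑ j ∈ Finset.range (i+1), a ^ j‖ :=
          norm_sum_le _ _
      _ ≤ ∑ i ∈ Finset.range n, |c (i+1) - c i| * (2 / ‖a - 1‖) := by
          apply Finset.sum_le_sum
          intro i _
          rw [norm_mul]
          have : ‖((c (i+1) : ℂ) - (c i : ℂ))‖ = |c (i+1) - c i| := by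
            rw [← Complex.ofReal_sub, Complex.norm_real, Real.norm_eq_abs]
          rw [this]
          exact mul_le_mul_of_nonneg_left (geom_partial_bound a ha hne _) (abs_nonneg _)
      _ = (∑ i ∈ Finset.range n, |c (i+1) - c i|) * (2 / ‖a - 1‖) := by
          rw [Finset.sum_mul]
      _ ≤ (c 0 + c n) * (2 / ‖a - 1‖) := by
          apply mul_le_mul_of_nonneg_right _ hM
          have habs : ∑ i ∈ Finset.range n, |c (i+1) - c i| = |c n - c 0| := by
            rcases hmono with hm | hm
            · rw [abs_of_nonneg (sub_nonneg.mpr (hm (Nat.zero_le n)))]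
              rw [← Finset.sum_range_sub c n]
              exact Finset.sum_congr rfl fun i _ =>
                abs_of_nonneg (sub_nonneg.mpr (hm (Nat.le_succ i)))
            · rw [abs_of_nonpos (sub_nonpos.mpr (hm (Nat.zero_le n))), neg_sub]
              rw [← Finset.sum_range_sub' c n]
              exact Finset.sum_congr rfl fun i _ => by
                rw [abs_of_nonpos (sub_nonpos.mpr (hm (Nat.le_succ i))), neg_sub]
          rw [habs]
          calc |c n - c 0| ≤ |c n| + |c 0| := abs_sub _ _
            _ = c n + c 0 := by rw [abs_of_nonneg (hc n), abs_of_nonneg (hc 0)]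
            _ = c 0 + c n := add_comm _ _
      _ = 2 / ‖a - 1‖ * (c 0 + c n) := mul_comm _ _
  calc ‖(c n : ℂ) * ∑ i ∈ Finset.range (n+1), a ^ i -
        ∑ i ∈ Finset.range n, ((c (i+1) : ℂ) - (c i : ℂ)) * ∑ j ∈ Finset.range (i+1), a ^ j‖
      ≤ ‖(c n : ℂ) * ∑ i ∈ Finset.range (n+1), a ^ i‖ +
        ‖∑ i ∈ Finset.range n, ((c (i+1) : ℂ) - (c i : ℂ)) * ∑ j ∈ Finset.range (i+1), a ^ j‖ :=
        norm_sub_le _ _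
    _ ≤ 2 / ‖a - 1‖ * c n + 2 / ‖a - 1‖ * (c 0 + c n) := add_le_add h1 h2
    _ = 2 / ‖a - 1‖ * (c 0 + 2 * c n) := by ring

/-- `k_n(z₁,z₂)/S_n → 0` for distinct points of the closed disk. -/
theorem kernel_small (ω : ℕ → ℝ) (hω : IsWeight ω) (z₁ z₂ : ℂ)
    (h₁ : z₁ ∈ Metric.closedBall (0 : ℂ) 1) (h₂ : z₂ ∈ Metric.closedBall (0 : ℂ) 1)
    (hne : z₁ ≠ z₂) :
    Filter.Tendsto (fun n => kN ω n z₁ z₂ / (S ω n : ℂ)) Filter.atTop (nhds 0) := by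
  obtain ⟨hpos, hmono, hω0, hsqrt, hdiv⟩ := hω
  rw [Metric.mem_closedBall, dist_zero_right] at h₁ h₂
  set a : ℂ := (starRingEnd ℂ) z₂ * z₁ with ha_def
  have ha1 : ‖a‖ ≤ 1 := by
    rw [ha_def, norm_mul, RingHomIsometric.norm_map]
    calc ‖z₂‖ * ‖z₁‖ ≤ 1 * 1 := mul_le_mul h₂ h₁ (norm_nonneg _) zero_le_one
      _ = 1 := mul_one 1
  have hane : a ≠ 1 := by
    intro h
    have hz2 : ‖z₂‖ = 1 := by
      by_contra hc
      have h2' : ‖z₂‖ < 1 := lt_of_le_of_ne h₂ hc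
      have : ‖a‖ < 1 := by
        rw [ha_def, norm_mul, RingHomIsometric.norm_map]
        calc ‖z₂‖ * ‖z₁‖ ≤ ‖z₂‖ * 1 := mul_le_mul_of_nonneg_left h₁ (norm_nonneg _)
          _ = ‖z₂‖ := mul_one _
          _ < 1 := h2'
      rw [h] at this; simp at this
    apply hne
    have : z₂ * ((starRingEnd ℂ) z₂ * z₁) = z₂ * 1 := by rw [← ha_def, h]
    rw [mul_one, ← mul_assoc, Complex.mul_conj, Complex.normSq_eq_norm_sq,
      hz2] at this
    simpa using this
  -- basic positivity
  have hSpos : ∀ n, 0 < S ω n := fun n =>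
    Finset.sum_pos (fun k _ => one_div_pos.mpr (hpos k)) ⟨0, Finset.mem_range.mpr (Nat.succ_pos n)⟩
  -- S → ∞
  have hS : Tendsto (S ω) atTop atTop := by
    have h := (not_summable_iff_tendsto_nat_atTop_of_nonneg
      (f := fun k => 1 / ω k) (fun k => (one_div_pos.mpr (hpos k)).le)).mp hdiv
    have := h.comp (tendsto_add_atTop_nat 1)
    exact this
  -- 1/S → 0
  have hSinv : Tendsto (fun n => 1 / S ω n) atTop (nhds 0) := by
    simpa [one_div, Function.comp_def] using (tendsto_inv_atTop_zero.comp hS)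
  -- (1/ω n)/S n → 0
  have hrat : Tendsto (fun n => (1 / ω n) / S ω n) atTop (nhds 0) := by
    have hsqrt' : Tendsto (fun n => ω (n - Nat.sqrt n) / ω n) atTop (nhds 1) := by
      have := hsqrt.inv₀ one_ne_zero
      simpa [inv_div] using this
    have hmax : Tendsto (fun n => max (ω (n - Nat.sqrt n) / ω n) 1) atTop (nhds 1) := by
      simpa using hsqrt'.max
        (tendsto_const_nhds : Tendsto (fun _ : ℕ => (1:ℝ)) atTop (nhds 1))
    have hsqrtTop : Tendsto Nat.sqrt atTop atTop := by
      apply tendsto_atTop_atTop_of_monotone (fun x y h => Nat.sqrt_le_sqrt h)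
      intro b; exact ⟨b * b, (Nat.sqrt_eq b).ge⟩
    have hinvsq : Tendsto (fun n => 1 / ((Nat.sqrt n : ℝ) + 1)) atTop (nhds 0) := by
      simp only [one_div]
      apply Tendsto.comp tendsto_inv_atTop_zero
      apply tendsto_atTop_add_const_right
      exact tendsto_natCast_atTop_atTop.comp hsqrtTop
    have hB : Tendsto (fun n => max (ω (n - Nat.sqrt n) / ω n) 1 * (1 / ((Nat.sqrt n : ℝ) + 1)))
        atTop (nhds 0) := by simpa using hmax.mul hinvsq
    apply squeeze_zero (fun n => div_nonneg (one_div_pos.mpr (hpos n)).le (hSpos n).le)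
      (g := fun n => max (ω (n - Nat.sqrt n) / ω n) 1 * (1 / ((Nat.sqrt n : ℝ) + 1))) _ hB
    intro n
    set r := Nat.sqrt n with hr
    have hrn : r ≤ n := Nat.sqrt_le_self n
    set m : ℝ := max (ω (n - r)) (ω n) with hm
    have hmpos : 0 < m := lt_max_of_lt_left (hpos _)
    -- S ω n ≥ (r+1)/m
    have hSlb : ((r : ℝ) + 1) / m ≤ S ω n := by
      have hsub : Finset.Icc (n - r) n ⊆ Finset.range (n + 1) := by
        intro k hk
        rw [Finset.mem_Icc] at hk
        exact Finset.mem_range.mpr (Nat.lt_succ_of_le hk.2)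
      have hterm : ∀ k ∈ Finset.Icc (n - r) n, 1 / m ≤ 1 / ω k := by
        intro k hk
        rw [Finset.mem_Icc] at hk
        apply one_div_le_one_div_of_le (hpos k)
        rcases hmono with hmo | hmo
        · exact le_max_of_le_right (hmo hk.2)
        · exact le_max_of_le_left (hmo hk.1)
      calc ((r : ℝ) + 1) / m = ∑ k ∈ Finset.Icc (n - r) n, 1 / m := by
            have hcard : n + 1 - (n - r) = r + 1 := by omega
            rw [Finset.sum_const, Nat.card_Icc, hcard, nsmul_eq_mul]
            push_cast
            ring
        _ ≤ ∑ k ∈ Finset.Icc (n - r) n, 1 / ω k := Finset.sum_le_sum hterm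
        _ ≤ S ω n := Finset.sum_le_sum_of_subset_of_nonneg hsub
            (fun k _ _ => (one_div_pos.mpr (hpos k)).le)
    have hfrac : (1 / ω n) / S ω n ≤ max (ω (n - r) / ω n) 1 * (1 / ((r : ℝ) + 1)) := by
      have h1 : (1 / ω n) / S ω n ≤ (1 / ω n) / (((r : ℝ) + 1) / m) :=
        div_le_div_of_nonneg_left (one_div_pos.mpr (hpos n)).le
          (div_pos (by positivity) hmpos) hSlb
      have h2 : (1 / ω n) / (((r : ℝ) + 1) / m) = max (ω (n - r) / ω n) 1 * (1 / ((r : ℝ) + 1)) := by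
        have hmax_div : max (ω (n - r) / ω n) 1 = m / ω n := by
          rw [hm, ← max_div_div_right (hpos n).le, div_self (hpos n).ne']
        rw [hmax_div]
        have h3 : ((r : ℝ) + 1) ≠ 0 := by positivity
        have h4 : ω n ≠ 0 := (hpos n).ne'
        have h5 : m ≠ 0 := hmpos.ne'
        field_simp
      exact h1.trans h2.le
    exact hfrac
  -- combined bound
  have hbound : ∀ n, ‖kN ω n z₁ z₂ / (S ω n : ℂ)‖
      ≤ 2 / ‖a - 1‖ * (1 / S ω n) + 2 / ‖a - 1‖ * 2 * ((1 / ω n) / S ω n) := by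
    intro n
    have hk : kN ω n z₁ z₂ = ∑ k ∈ Finset.range (n + 1), ((1 / ω k : ℝ) : ℂ) * a ^ k := by
      unfold kN
      apply Finset.sum_congr rfl
      intro k _
      rw [ha_def, mul_pow]
      push_cast
      field_simp
    have habel := abel_bound a ha1 hane (fun k => 1 / ω k)
      (fun k => (one_div_pos.mpr (hpos k)).le)
      (by rcases hmono with hmo | hmo
          · exact Or.inr fun x y h => one_div_le_one_div_of_le (hpos x) (hmo h)
          · exact Or.inl fun x y h => one_div_le_one_div_of_le (hpos y) (hmo h)) n
    have hc0 : 1 / ω 0 = 1 := by rw [hω0]; norm_num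
    rw [hc0] at habel
    rw [norm_div, hk]
    have hSnorm : ‖((S ω n : ℝ) : ℂ)‖ = S ω n := by
      rw [Complex.norm_real, Real.norm_of_nonneg (hSpos n).le]
    rw [hSnorm]
    calc ‖∑ k ∈ Finset.range (n + 1), ((1 / ω k : ℝ) : ℂ) * a ^ k‖ / S ω n
        ≤ 2 / ‖a - 1‖ * (1 + 2 * (1 / ω n)) / S ω n :=
          (div_le_div_iff_of_pos_right (hSpos n)).mpr habel
      _ = 2 / ‖a - 1‖ * (1 / S ω n) + 2 / ‖a - 1‖ * 2 * ((1 / ω n) / S ω n) := by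
          have h4 : ω n ≠ 0 := (hpos n).ne'
          have h5 : S ω n ≠ 0 := (hSpos n).ne'
          have h6 : ‖a - 1‖ ≠ 0 :=
              (norm_ne_zero_iff.mpr (sub_ne_zero.mpr hane) : ‖a - 1‖ ≠ 0)
          field_simp
  rw [tendsto_zero_iff_norm_tendsto_zero]
  apply squeeze_zero (fun n => norm_nonneg _) hbound
  have : Tendsto (fun n => 2 / ‖a - 1‖ * (1 / S ω n) + 2 / ‖a - 1‖ * 2 * ((1 / ω n) / S ω n))
      atTop (nhds (2 / ‖a - 1‖ * 0 + 2 / ‖a - 1‖ * 2 * 0)) :=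
    (hSinv.const_mul _).add (hrat.const_mul _)
  simpa using this

end
end

section
/- Let ω : ℕ → (0,∞) be a monotone (nondecreasing or nonincreasing) sequence with ω₀ = 1, and let z₁, z₂ ∈ closure(𝔻) with z₁ ≠ z₂. Then for every n ∈ ℕ, |∑_{k=0}^n z̄₂^k z₁^k/ω_k| ≤ (2/|1 − z̄₂ z₁|)·(2/ω_n + 1). -/
open Polynomial Filter Topology MeasureTheory Metric Asymptotics

noncomputable section

/-- Explicit bound for the truncated kernels at distinct points of the closed disk. -/
theorem kernel_explicit_bound (ω : ℕ → ℝ) (hpos : ∀ k, 0 < ω k)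
    (hmono : Monotone ω ∨ Antitone ω) (hω0 : ω 0 = 1) (z₁ z₂ : ℂ)
    (h₁ : z₁ ∈ Metric.closedBall (0 : ℂ) 1) (h₂ : z₂ ∈ Metric.closedBall (0 : ℂ) 1)
    (hne : z₁ ≠ z₂) :
    ∀ n : ℕ,
      ‖∑ k ∈ Finset.range (n + 1), (starRingEnd ℂ z₂) ^ k * z₁ ^ k / (ω k : ℂ)‖ ≤
        2 / ‖1 - starRingEnd ℂ z₂ * z₁‖ * (2 / ω n + 1) := by
  intro n
  set w : ℂ := starRingEnd ℂ z₂ * z₁ with hw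
  have h1 : ‖z₁‖ ≤ 1 := by simpa using h₁
  have h2 : ‖z₂‖ ≤ 1 := by simpa using h₂
  have hwabs : ‖w‖ ≤ 1 := by
    rw [hw, norm_mul, Complex.norm_conj]
    nlinarith [norm_nonneg z₁, norm_nonneg z₂]
  have hw1 : w ≠ 1 := by
    intro h
    apply hne
    have habs : ‖z₂‖ * ‖z₁‖ = 1 := by
      have := congrArg norm h
      simpa [hw, norm_mul, Complex.norm_conj] using this
    have hz2 : ‖z₂‖ = 1 :=
      le_antisymm h2 (by nlinarith [norm_nonneg z₁, norm_nonneg z₂])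
    have hn2 : Complex.normSq z₂ = 1 := by
      rw [← Complex.sq_norm, hz2]; norm_num
    have : z₂ * (starRingEnd ℂ z₂ * z₁) = z₂ * 1 := by rw [← hw, h]
    rw [← mul_assoc, Complex.mul_conj, hn2] at this
    simpa using this
  have hden : 0 < ‖1 - w‖ := by
    rw [norm_pos_iff, sub_ne_zero]
    exact fun h => hw1 h.symm
  set M : ℝ := 2 / ‖1 - w‖ with hM
  have hM0 : 0 ≤ M := by positivity
  have hG : ∀ m : ℕ, ‖∑ i ∈ Finset.range m, w ^ i‖ ≤ M := by
    intro m
    rw [geom_sum_eq hw1, norm_div]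
    have h1' : ‖w ^ m - 1‖ ≤ 2 := by
      calc ‖w ^ m - 1‖ ≤ ‖w ^ m‖ + 1 := by
            simpa using norm_sub_le (w ^ m) 1
        _ ≤ 2 := by
            rw [norm_pow]
            have : ‖w‖ ^ m ≤ 1 := pow_le_one₀ (norm_nonneg w) hwabs
            linarith
    have : ‖w - 1‖ = ‖1 - w‖ := by
      rw [← norm_neg]; ring_nf
    rw [this, hM]
    gcongr
  -- Abel summation
  have hterm : ∀ k, starRingEnd ℂ z₂ ^ k * z₁ ^ k / (ω k : ℂ)
      = ((1 / ω k : ℝ) : ℂ) * w ^ k := by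
    intro k
    rw [hw, mul_pow]
    push_cast
    ring
  rw [Finset.sum_congr rfl fun k _ => hterm k]
  have habel := Finset.sum_range_by_parts (fun k => ((1 / ω k : ℝ) : ℂ))
    (fun k => w ^ k) (n + 1)
  simp only [smul_eq_mul, Nat.add_sub_cancel] at habel
  rw [habel]
  have hsum : ‖∑ i ∈ Finset.range n,
      (((1 / ω (i+1) : ℝ) : ℂ) - ((1 / ω i : ℝ) : ℂ)) * ∑ j ∈ Finset.range (i+1), w ^ j‖
      ≤ (1 / ω n + 1) * M := by
    calc ‖∑ i ∈ Finset.range n,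
        (((1 / ω (i+1) : ℝ) : ℂ) - ((1 / ω i : ℝ) : ℂ)) * ∑ j ∈ Finset.range (i+1), w ^ j‖
        ≤ ∑ i ∈ Finset.range n, |1 / ω (i+1) - 1 / ω i| * M := by
          refine (norm_sum_le _ _).trans (Finset.sum_le_sum fun i _ => ?_)
          rw [norm_mul]
          have : ‖((1 / ω (i+1) : ℝ) : ℂ) - ((1 / ω i : ℝ) : ℂ)‖
              = |1 / ω (i+1) - 1 / ω i| := by
            rw [← Complex.ofReal_sub, Complex.norm_real, Real.norm_eq_abs]
          rw [this]
          exact mul_le_mul_of_nonneg_left (hG _) (abs_nonneg _)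
      _ = (∑ i ∈ Finset.range n, |1 / ω (i+1) - 1 / ω i|) * M := by
          rw [Finset.sum_mul]
      _ ≤ (1 / ω n + 1) * M := by
          refine mul_le_mul_of_nonneg_right ?_ hM0
          rcases hmono with hm | hm
          · have : ∀ i, |1 / ω (i+1) - 1 / ω i| = 1 / ω i - 1 / ω (i+1) := by
              intro i
              rw [abs_sub_comm, abs_of_nonneg]
              have := hm (Nat.le_succ i)
              have h0i := hpos i
              have h0i1 := hpos (i+1)
              rw [sub_nonneg]
              exact one_div_le_one_div_of_le h0i this
            rw [Finset.sum_congr rfl fun i _ => this i, Finset.sum_range_sub' (fun i => 1 / ω i)]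
            rw [hω0]
            have : 0 < 1 / ω n := one_div_pos.mpr (hpos n)
            linarith
          · have : ∀ i, |1 / ω (i+1) - 1 / ω i| = 1 / ω (i+1) - 1 / ω i := by
              intro i
              rw [abs_of_nonneg]
              have := hm (Nat.le_succ i)
              have h0i := hpos i
              have h0i1 := hpos (i+1)
              rw [sub_nonneg]
              exact one_div_le_one_div_of_le h0i1 this
            rw [Finset.sum_congr rfl fun i _ => this i, Finset.sum_range_sub (fun i => 1 / ω i)]
            rw [hω0]
            linarith
  calc ‖((1 / ω n : ℝ) : ℂ) * ∑ i ∈ Finset.range (n+1), w ^ i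
        - ∑ i ∈ Finset.range n,
          (((1 / ω (i+1) : ℝ) : ℂ) - ((1 / ω i : ℝ) : ℂ)) * ∑ j ∈ Finset.range (i+1), w ^ j‖
      ≤ ‖((1 / ω n : ℝ) : ℂ) * ∑ i ∈ Finset.range (n+1), w ^ i‖
        + ‖∑ i ∈ Finset.range n,
          (((1 / ω (i+1) : ℝ) : ℂ) - ((1 / ω i : ℝ) : ℂ)) * ∑ j ∈ Finset.range (i+1), w ^ j‖ :=
        norm_sub_le _ _
    _ ≤ (1 / ω n) * M + (1 / ω n + 1) * M := by
        refine add_le_add ?_ hsum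
        rw [norm_mul, Complex.norm_real, Real.norm_eq_abs, abs_of_nonneg (one_div_pos.mpr (hpos n)).le]
        exact mul_le_mul_of_nonneg_left (hG _) (one_div_pos.mpr (hpos n)).le
    _ = M * (2 / ω n + 1) := by ring

end
end

section
/- Let ω be a weight, let f be a monic polynomial of degree d ≥ 1 with simple zeros z₁,…,z_d ordered so that z₁,…,z_{d₁} lie on the unit circle 𝕋 (d₁ ≥ 1) and z_{d₁+1},…,z_d lie in ℂ ∖ closure(𝔻). Let E be the d×d matrix with entries e_{l,m} = k_{n+d}(z_l, z_m), v₀ = (1,…,1) ∈ ℂ^d, and A_n = (A_{1,n},…,A_{d,n}) the solution of E·A_nᵗ = v₀ᵗ. Then for each 1 ≤ i ≤ d₁ there is a constant C_i, independent of n, with ∑_{k=0}^{n+d} |A_{i,n}·z̄_i^k/ω_k| ≤ C_i for all n, while for each d₁ < i ≤ d one has ∑_{k=0}^{n+d} |A_{i,n}·z̄_i^k/ω_k| → 0 as n → ∞. -/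
open Polynomial Filter Topology MeasureTheory Metric Asymptotics

noncomputable section

namespace AW
variable {ω : ℕ → ℝ}

lemma step (hω : IsWeight ω) {ρ : ℝ} (hρ : 1 < ρ) :
    ∃ M₁ : ℕ, 1 ≤ M₁ ∧ ∀ n, M₁ ≤ n → ω n ≤ ρ * ω (n - 1) ∧ ω (n - 1) ≤ ρ * ω n := by
  obtain ⟨hpos, hmono, h0, hrat, -⟩ := hω
  have hmem : Set.Ioo ρ⁻¹ ρ ∈ nhds (1:ℝ) :=
    Ioo_mem_nhds (by
      rw [inv_lt_one_iff₀]; right; exact hρ) hρ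
  obtain ⟨M₀, hM₀⟩ := (hrat.eventually hmem).exists_forall_of_atTop
  refine ⟨max M₀ 1, le_max_right _ _, fun n hn => ?_⟩
  have hn1 : 1 ≤ n := le_trans (le_max_right _ _) hn
  have hs1 : 1 ≤ Nat.sqrt n := by
    rwa [Nat.le_sqrt]
  have hle : n - Nat.sqrt n ≤ n - 1 := Nat.sub_le_sub_left hs1 n
  have h := hM₀ n (le_trans (le_max_left _ _) hn)
  have hd : 0 < ω (n - Nat.sqrt n) := hpos _
  have h1 : ω n < ρ * ω (n - Nat.sqrt n) := by
    rw [div_lt_iff₀ hd] at * ; nlinarith [h.2]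
  have h2 : ω (n - Nat.sqrt n) < ρ * ω n := by
    have := h.1
    have hρ0 : (0:ℝ) < ρ := by linarith
    rw [lt_div_iff₀ hd] at this
    calc ω (n - Nat.sqrt n) = ρ * (ρ⁻¹ * ω (n - Nat.sqrt n)) := by
          field_simp
      _ < ρ * ω n := by nlinarith
  rcases hmono with hm | hm
  · exact ⟨le_trans h1.le (by nlinarith [hm hle, hpos (n-1)]),
      le_trans (hm (Nat.sub_le n 1)) (by nlinarith [hpos n])⟩
  · exact ⟨le_trans (hm (Nat.sub_le n 1)) (by nlinarith [hpos (n-1)]),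
      le_trans (hm hle) h2.le⟩

lemma geom (hω : IsWeight ω) {ρ : ℝ} (hρ : 1 < ρ) :
    ∃ B : ℝ, 1 ≤ B ∧ ∀ k j : ℕ, ω (k + j) ≤ B * ρ ^ j * ω k ∧ ω k ≤ B * ρ ^ j * ω (k + j) := by
  have hpos := hω.1
  obtain ⟨M₁, hM₁1, hstep⟩ := step hω hρ
  have hρ0 : (0:ℝ) < ρ := by linarith
  -- chain lemma
  have chain : ∀ a, M₁ ≤ a → ∀ j, ω (a + j) ≤ ρ ^ j * ω a ∧ ω a ≤ ρ ^ j * ω (a + j) := by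
    intro a ha j
    induction j with
    | zero => simp
    | succ j ih =>
      have hstep' := hstep (a + j + 1) (by omega)
      have he : a + j + 1 - 1 = a + j := by omega
      rw [he] at hstep'
      constructor
      · calc ω (a + (j+1)) = ω (a + j + 1) := by ring_nf
          _ ≤ ρ * ω (a + j) := hstep'.1
          _ ≤ ρ * (ρ ^ j * ω a) := by nlinarith [ih.1]
          _ = ρ ^ (j+1) * ω a := by ring
      · calc ω a ≤ ρ ^ j * ω (a + j) := ih.2
          _ ≤ ρ ^ j * (ρ * ω (a + j + 1)) := by
              have := hstep'.2
              have : (0:ℝ) ≤ ρ ^ j := by positivity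
              nlinarith [hstep'.2, pow_pos hρ0 j]
          _ = ρ ^ (j+1) * ω (a + (j+1)) := by ring_nf
  set B : ℝ := (∑ i ∈ Finset.range (M₁+1), ω i) * (∑ i ∈ Finset.range (M₁+1), (ω i)⁻¹) with hB
  have hwsum : ∀ b, b ≤ M₁ → ω b ≤ ∑ i ∈ Finset.range (M₁+1), ω i := by
    intro b hb
    exact Finset.single_le_sum (fun i _ => (hpos i).le) (Finset.mem_range.mpr (by omega))
  have hisum : ∀ b, b ≤ M₁ → (ω b)⁻¹ ≤ ∑ i ∈ Finset.range (M₁+1), (ω i)⁻¹ := by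
    intro b hb
    exact Finset.single_le_sum (fun i _ => (inv_nonneg.mpr (hpos i).le))
      (Finset.mem_range.mpr (by omega))
  have hBsmall : ∀ a b, a ≤ M₁ → b ≤ M₁ → ω a ≤ B * ω b := by
    intro a b ha hb
    have h1 := hwsum a ha
    have h2 := hisum b hb
    have hb0 := hpos b
    have : ω a = (ω a * (ω b)⁻¹) * ω b := by field_simp
    rw [this, hB]
    have h3 : ω a * (ω b)⁻¹ ≤ (∑ i ∈ Finset.range (M₁+1), ω i) * (∑ i ∈ Finset.range (M₁+1), (ω i)⁻¹) := by
      apply mul_le_mul h1 h2 (inv_nonneg.mpr hb0.le)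
      exact Finset.sum_nonneg (fun i _ => (hpos i).le)
    nlinarith
  have hB1 : 1 ≤ B := by
    have := hBsmall 0 0 (by omega) (by omega)
    have h0 := hpos 0
    nlinarith
  refine ⟨B, hB1, fun k j => ?_⟩
  have hρj1 : (1:ℝ) ≤ ρ ^ j := one_le_pow₀ hρ.le
  by_cases hk : M₁ ≤ k
  · have h := chain k hk j
    have hk0 := hpos k
    have hkj0 := hpos (k + j)
    constructor
    · calc ω (k+j) ≤ ρ ^ j * ω k := h.1
        _ ≤ B * ρ ^ j * ω k := by nlinarith
    · calc ω k ≤ ρ ^ j * ω (k+j) := h.2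
        _ ≤ B * ρ ^ j * ω (k+j) := by nlinarith
  · push_neg at hk
    by_cases hkj : k + j ≤ M₁
    · have h1 := hBsmall (k+j) k hkj (by omega)
      have h2 := hBsmall k (k+j) (by omega) hkj
      have hk0 := hpos k
      have hkj0 := hpos (k+j)
      have hB0 : 0 < B := by linarith
      constructor
      · calc ω (k+j) ≤ B * ω k := h1
          _ ≤ B * ρ ^ j * ω k := by nlinarith
      · calc ω k ≤ B * ω (k+j) := h2
          _ ≤ B * ρ ^ j * ω (k+j) := by nlinarith
    · push_neg at hkj
      set t := k + j - M₁ with ht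
      have htj : t ≤ j := by omega
      have heq : M₁ + t = k + j := by omega
      have hch := chain M₁ le_rfl t
      rw [heq] at hch
      have h1 := hBsmall M₁ k le_rfl (by omega)
      have h2 := hBsmall k M₁ (by omega) le_rfl
      have hρt : ρ ^ t ≤ ρ ^ j := pow_le_pow_right₀ hρ.le htj
      have hk0 := hpos k
      have hkj0 := hpos (k+j)
      have hM0 := hpos M₁
      have hB0 : (0:ℝ) < B := by linarith
      have hρt0 : (0:ℝ) < ρ ^ t := by positivity
      constructor
      · calc ω (k+j) ≤ ρ ^ t * ω M₁ := hch.1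
          _ ≤ ρ ^ t * (B * ω k) := by nlinarith
          _ ≤ B * ρ ^ j * ω k := by nlinarith
      · calc ω k ≤ B * ω M₁ := h2
          _ ≤ B * (ρ ^ t * ω (k+j)) := by nlinarith [hch.2]
          _ ≤ B * ρ ^ j * ω (k+j) := by nlinarith [mul_le_mul_of_nonneg_right hρt hkj0.le]


/-- `T r N = ∑_{k≤N} r^k/ω_k`. -/
def TT (ω : ℕ → ℝ) (r : ℝ) (N : ℕ) : ℝ := ∑ k ∈ Finset.range (N + 1), r ^ k / ω k

lemma TT_pos (hpos : ∀ k, 0 < ω k) {r : ℝ} (hr : 0 < r) (N : ℕ) : 0 < TT ω r N := by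
  apply Finset.sum_pos (fun k _ => div_pos (pow_pos hr k) (hpos k))
  exact ⟨0, Finset.mem_range.mpr (by omega)⟩

lemma TT_one (N : ℕ) : TT ω 1 N = S ω N := by
  unfold TT S; simp

lemma S_le_TT (hpos : ∀ k, 0 < ω k) {r : ℝ} (hr : 1 ≤ r) (N : ℕ) : S ω N ≤ TT ω r N := by
  apply Finset.sum_le_sum
  intro k _
  have h1 : (1:ℝ) ≤ r ^ k := one_le_pow₀ hr
  have h2 := hpos k
  rw [div_le_div_iff_of_pos_right h2] at *
  exact h1

lemma term_le_TT (hpos : ∀ k, 0 < ω k) {r : ℝ} (hr : 0 ≤ r) (N : ℕ) :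
    r ^ N / ω N ≤ TT ω r N := by
  apply Finset.single_le_sum (f := fun k => r ^ k / ω k)
    (fun k _ => div_nonneg (pow_nonneg hr k) (hpos k).le) (Finset.mem_range.mpr (by omega))

lemma one_le_S (hω : IsWeight ω) (N : ℕ) : 1 ≤ S ω N := by
  have h : 1 / ω 0 ≤ S ω N := Finset.single_le_sum (f := fun k => 1 / ω k)
    (fun k _ => div_nonneg zero_le_one (hω.1 k).le) (Finset.mem_range.mpr (by omega))
  rwa [hω.2.2.1, div_one] at h

lemma S_tendsto (hω : IsWeight ω) : Tendsto (S ω) atTop atTop := by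
  have hpos := hω.1
  have h := (not_summable_iff_tendsto_nat_atTop_of_nonneg
    (f := fun k => 1 / ω k) (fun n => div_nonneg zero_le_one (hpos n).le)).mp hω.2.2.2.2
  exact h.comp (tendsto_add_atTop_nat 1)

/-- ω_N · S_N → ∞. -/
lemma wS_tendsto (hω : IsWeight ω) : Tendsto (fun N => ω N * S ω N) atTop atTop := by
  obtain ⟨hpos, hmono, h0, hrat, hnsum⟩ := hω
  rcases hmono with hm | hm
  · apply tendsto_atTop_mono (fun N => ?_) (S_tendsto ⟨hpos, Or.inl hm, h0, hrat, hnsum⟩)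
    have h1 : 1 ≤ ω N := by rw [← h0]; exact hm (Nat.zero_le N)
    have h2 : 0 < S ω N :=
      lt_of_lt_of_le one_pos (one_le_S ⟨hpos, Or.inl hm, h0, hrat, hnsum⟩ N)
    nlinarith
  · -- antitone case
    have hmem : Set.Ioi (1/2 : ℝ) ∈ nhds (1:ℝ) := Ioi_mem_nhds (by norm_num)
    obtain ⟨M₀, hM₀⟩ := (hrat.eventually hmem).exists_forall_of_atTop
    apply tendsto_atTop_mono' _ (show ∀ᶠ N in atTop,
      ((Nat.sqrt N : ℝ) + 1) * (1/2) ≤ ω N * S ω N from ?_)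
    · -- (√N + 1)/2 → ∞
      apply Tendsto.atTop_mul_const (by norm_num)
      apply tendsto_atTop_add_const_right
      have hs : Tendsto Nat.sqrt atTop atTop := by
        apply tendsto_atTop_atTop.mpr
        intro b
        exact ⟨b * b, fun a ha => by rwa [Nat.le_sqrt]⟩
      exact tendsto_natCast_atTop_atTop.comp hs
    · filter_upwards [eventually_ge_atTop M₀] with N hN
      have hrat' := hM₀ N hN
      have hd : 0 < ω (N - Nat.sqrt N) := hpos _
      -- S_N ≥ (√N + 1)/ω_{N-√N}
      have hsub : Finset.Icc (N - Nat.sqrt N) N ⊆ Finset.range (N+1) := by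
        intro k hk
        simp only [Finset.mem_Icc] at hk
        exact Finset.mem_range.mpr (by omega)
      have hS1 : ∑ k ∈ Finset.Icc (N - Nat.sqrt N) N, 1 / ω k ≤ S ω N := by
        apply Finset.sum_le_sum_of_subset_of_nonneg hsub
        intro k _ _; exact div_nonneg zero_le_one (hpos k).le
      have hterm : ∀ k ∈ Finset.Icc (N - Nat.sqrt N) N, 1 / ω (N - Nat.sqrt N) ≤ 1 / ω k := by
        intro k hk
        simp only [Finset.mem_Icc] at hk
        have := hm hk.1
        exact one_div_le_one_div_of_le (hpos k) this
      have hcard : (Finset.Icc (N - Nat.sqrt N) N).card = Nat.sqrt N + 1 := by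
        rw [Nat.card_Icc]
        have : Nat.sqrt N ≤ N := Nat.sqrt_le_self N
        omega
      have hS2 : ((Nat.sqrt N : ℝ) + 1) * (1 / ω (N - Nat.sqrt N)) ≤ S ω N := by
        calc ((Nat.sqrt N : ℝ) + 1) * (1 / ω (N - Nat.sqrt N))
            = ∑ _k ∈ Finset.Icc (N - Nat.sqrt N) N, 1 / ω (N - Nat.sqrt N) := by
              rw [Finset.sum_const, hcard]; push_cast; ring
          _ ≤ ∑ k ∈ Finset.Icc (N - Nat.sqrt N) N, 1 / ω k :=
              Finset.sum_le_sum hterm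
          _ ≤ S ω N := hS1
      have hN0 := hpos N
      calc ((Nat.sqrt N : ℝ) + 1) * (1/2)
          ≤ ((Nat.sqrt N : ℝ) + 1) * (ω N / ω (N - Nat.sqrt N)) := by
            apply mul_le_mul_of_nonneg_left hrat'.le (by positivity)
        _ = ω N * (((Nat.sqrt N : ℝ) + 1) * (1 / ω (N - Nat.sqrt N))) := by ring
        _ ≤ ω N * S ω N := by nlinarith [hS2]

end AW

namespace AW
variable {ω : ℕ → ℝ}

lemma geom_aux {x : ℝ} (h0 : 0 ≤ x) (h1 : x < 1) (n : ℕ) :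
    ∑ j ∈ Finset.range n, x ^ j ≤ (1 - x)⁻¹ := by
  have hmul := geom_sum_mul x n
  have hx : 0 < 1 - x := by linarith
  have hxn : (0:ℝ) ≤ x ^ n := pow_nonneg h0 n
  rw [inv_eq_one_div, le_div_iff₀ hx]
  nlinarith

/-- `T_N(r) ω_N ≤ C r^N` for `r > 1`. -/
lemma TT_upper (hω : IsWeight ω) {r : ℝ} (hr : 1 < r) :
    ∃ C : ℝ, 0 < C ∧ ∀ N, TT ω r N * ω N ≤ C * r ^ N := by
  have hpos := hω.1
  set ρ := (1 + r)/2 with hρdef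
  have hρ1 : 1 < ρ := by rw [hρdef]; linarith
  have hρr : ρ < r := by rw [hρdef]; linarith
  obtain ⟨B, hB1, hB⟩ := geom hω hρ1
  have hfrac : 0 < 1 - ρ/r := by
    rw [sub_pos, div_lt_one (by positivity)]; exact hρr
  refine ⟨B * (1 - ρ/r)⁻¹, by positivity, fun N => ?_⟩
  have hstep : ∀ k ∈ Finset.range (N+1), r ^ k / ω k * ω N ≤ B * (r ^ N * (ρ/r) ^ (N - k)) := by
    intro k hk
    have hkN : k ≤ N := by simpa [Nat.lt_succ_iff] using Finset.mem_range.mp hk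
    have hgeom := (hB k (N - k)).1
    rw [show k + (N - k) = N by omega] at hgeom
    have hωk := hpos k
    have hωN := hpos N
    have hrpow : r ^ N * (ρ/r) ^ (N-k) = r ^ k * ρ ^ (N-k) := by
      rw [div_pow, pow_sub₀ r (by positivity) hkN]
      field_simp
    rw [hrpow, div_mul_eq_mul_div, div_le_iff₀ hωk]
    calc r ^ k * ω N ≤ r ^ k * (B * ρ ^ (N-k) * ω k) := by
          apply mul_le_mul_of_nonneg_left hgeom (by positivity)
      _ = B * (r ^ k * ρ ^ (N-k)) * ω k := by ring
  have hsum : TT ω r N * ω N = ∑ k ∈ Finset.range (N+1), r ^ k / ω k * ω N := by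
    rw [TT, Finset.sum_mul]
  rw [hsum]
  calc ∑ k ∈ Finset.range (N+1), r ^ k / ω k * ω N
      ≤ ∑ k ∈ Finset.range (N+1), B * (r ^ N * (ρ/r) ^ (N - k)) :=
        Finset.sum_le_sum hstep
    _ = B * r ^ N * ∑ k ∈ Finset.range (N+1), (ρ/r) ^ (N - k) := by
        rw [Finset.mul_sum]; congr 1; ext k; ring
    _ = B * r ^ N * ∑ j ∈ Finset.range (N+1), (ρ/r) ^ j := by
        congr 1
        rw [← Finset.sum_range_reflect (fun j => (ρ/r) ^ j) (N+1)]
        apply Finset.sum_congr rfl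
        intro j hj
        have hjN : j ≤ N := by simpa [Nat.lt_succ_iff] using Finset.mem_range.mp hj
        congr 1
    _ ≤ B * r ^ N * (1 - ρ/r)⁻¹ := by
        apply mul_le_mul_of_nonneg_left (geom_aux (by positivity) (by
          rw [div_lt_one (by positivity)]; exact hρr) _) (by positivity)
    _ = B * (1 - ρ/r)⁻¹ * r ^ N := by ring

/-- Window bound: `T_{M+j}(r) ≤ C_j T_M(r)` for `r ≥ 1`. -/
lemma TT_window (hω : IsWeight ω) {r : ℝ} (hr : 1 ≤ r) (j : ℕ) :
    ∃ C : ℝ, 1 ≤ C ∧ ∀ M, TT ω r (M + j) ≤ C * TT ω r M := by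
  have hpos := hω.1
  obtain ⟨B, hB1, hB⟩ := geom hω (show (1:ℝ) < 2 by norm_num)
  refine ⟨(1 + 2*B*r) ^ j, one_le_pow₀ (by nlinarith), ?_⟩
  induction j with
  | zero => intro M; simp
  | succ j ih =>
    intro M
    have hTpos := TT_pos hpos (show (0:ℝ) < r by linarith) M
    have hstep : TT ω r (M + j + 1) ≤ (1 + 2*B*r) * TT ω r (M + j) := by
      have hexp : TT ω r (M + j + 1) = TT ω r (M + j) + r ^ (M+j+1) / ω (M+j+1) := by
        rw [TT, TT, Finset.sum_range_succ]
      have hgeom := (hB (M+j) 1).2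
      have hterm : r ^ (M+j+1) / ω (M+j+1) ≤ 2*B*r * (r ^ (M+j) / ω (M+j)) := by
        have h1 := hpos (M+j)
        have h2 := hpos (M+j+1)
        rw [div_le_iff₀ h2, pow_succ]
        have : (0:ℝ) ≤ r ^ (M+j) := by positivity
        calc r ^ (M+j) * r = r ^ (M+j) / ω (M+j) * r * ω (M+j) := by field_simp
          _ ≤ r ^ (M+j) / ω (M+j) * r * (B * 2 ^ 1 * ω (M + j + 1)) := by
              apply mul_le_mul_of_nonneg_left _ (by positivity)
              simpa using hgeom
          _ = 2*B*r * (r ^ (M+j) / ω (M+j)) * ω (M+j+1) := by ring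
      have hterm2 : r ^ (M+j) / ω (M+j) ≤ TT ω r (M+j) :=
        term_le_TT hpos (by linarith) _
      rw [hexp]
      nlinarith [TT_pos hpos (show (0:ℝ) < r by linarith) (M+j),
        mul_le_mul_of_nonneg_left hterm2 (show (0:ℝ) ≤ 2*B*r by nlinarith)]
    have hTj := TT_pos hpos (show (0:ℝ) < r by linarith) (M+j)
    calc TT ω r (M + (j+1)) = TT ω r (M + j + 1) := by ring_nf
      _ ≤ (1 + 2*B*r) * TT ω r (M + j) := hstep
      _ ≤ (1 + 2*B*r) * ((1 + 2*B*r) ^ j * TT ω r M) := by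
          apply mul_le_mul_of_nonneg_left (ih M) (by nlinarith)
      _ = (1 + 2*B*r) ^ (j+1) * TT ω r M := by ring

end AW

namespace AW
variable {ω : ℕ → ℝ}

/-- kernel coefficient function -/
def kfun (ω : ℕ → ℝ) (b : ℂ) : ℕ → ℂ := fun k => (starRingEnd ℂ b) ^ k / (ω k : ℂ)

/-- weighted inner product on coefficients, conjugate-linear in first slot -/
def en (ω : ℕ → ℝ) (N : ℕ) (x y : ℕ → ℂ) : ℂ :=
  ∑ k ∈ Finset.range (N + 1), (ω k : ℂ) * (starRingEnd ℂ (x k)) * y k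

/-- weighted square norm -/
def nr (ω : ℕ → ℝ) (N : ℕ) (x : ℕ → ℂ) : ℝ :=
  ∑ k ∈ Finset.range (N + 1), ω k * ‖x k‖ ^ 2

lemma nr_nonneg (hpos : ∀ k, 0 < ω k) (N : ℕ) (x : ℕ → ℂ) : 0 ≤ nr ω N x :=
  Finset.sum_nonneg fun k _ => mul_nonneg (hpos k).le (by positivity)

lemma en_kfun_left (hpos : ∀ k, 0 < ω k) (N : ℕ) (b : ℂ) (x : ℕ → ℂ) :
    en ω N (kfun ω b) x = ∑ k ∈ Finset.range (N + 1), x k * b ^ k := by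
  unfold en kfun
  apply Finset.sum_congr rfl
  intro k _
  have hk : (ω k : ℂ) ≠ 0 := by
    simpa using (hpos k).ne'
  rw [map_div₀, map_pow, Complex.conj_conj]
  rw [Complex.conj_ofReal]
  field_simp

lemma en_eval (hpos : ∀ k, 0 < ω k) {N : ℕ} (b : ℂ) {q : Polynomial ℂ}
    (hq : q.natDegree ≤ N) :
    en ω N (kfun ω b) (fun k => q.coeff k) = q.eval b := by
  rw [en_kfun_left hpos, Polynomial.eval_eq_sum_range' (Nat.lt_succ_of_le hq)]

lemma en_conj_symm (N : ℕ) (x y : ℕ → ℂ) :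
    en ω N x y = starRingEnd ℂ (en ω N y x) := by
  unfold en
  rw [map_sum]
  apply Finset.sum_congr rfl
  intro k _
  rw [map_mul, map_mul, Complex.conj_conj, Complex.conj_ofReal]
  ring

lemma en_right_sum {ι : Type*} (s : Finset ι) (N : ℕ) (x : ℕ → ℂ) (c : ι → ℂ) (y : ι → ℕ → ℂ) :
    en ω N x (fun k => ∑ m ∈ s, c m * y m k) = ∑ m ∈ s, c m * en ω N x (y m) := by
  simp only [en]
  calc ∑ k ∈ Finset.range (N+1), (ω k : ℂ) * (starRingEnd ℂ (x k)) * (∑ m ∈ s, c m * y m k)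
      = ∑ k ∈ Finset.range (N+1), ∑ m ∈ s, c m * ((ω k : ℂ) * (starRingEnd ℂ (x k)) * y m k) := by
        apply Finset.sum_congr rfl; intro k _
        rw [Finset.mul_sum]
        apply Finset.sum_congr rfl; intro m _; ring
    _ = ∑ m ∈ s, ∑ k ∈ Finset.range (N+1), c m * ((ω k : ℂ) * (starRingEnd ℂ (x k)) * y m k) :=
        Finset.sum_comm
    _ = ∑ m ∈ s, c m * ∑ k ∈ Finset.range (N+1), (ω k : ℂ) * (starRingEnd ℂ (x k)) * y m k := by
        apply Finset.sum_congr rfl; intro m _; rw [Finset.mul_sum]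

lemma en_left_sum {ι : Type*} (s : Finset ι) (N : ℕ) (y : ℕ → ℂ) (c : ι → ℂ) (x : ι → ℕ → ℂ) :
    en ω N (fun k => ∑ m ∈ s, c m * x m k) y
      = ∑ m ∈ s, (starRingEnd ℂ (c m)) * en ω N (x m) y := by
  simp only [en]
  calc ∑ k ∈ Finset.range (N+1), (ω k : ℂ) * (starRingEnd ℂ (∑ m ∈ s, c m * x m k)) * y k
      = ∑ k ∈ Finset.range (N+1), ∑ m ∈ s,
          (starRingEnd ℂ (c m)) * ((ω k : ℂ) * (starRingEnd ℂ (x m k)) * y k) := by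
        apply Finset.sum_congr rfl; intro k _
        rw [map_sum, Finset.mul_sum, Finset.sum_mul]
        apply Finset.sum_congr rfl; intro m _
        rw [map_mul]
        ring
    _ = ∑ m ∈ s, ∑ k ∈ Finset.range (N+1),
          (starRingEnd ℂ (c m)) * ((ω k : ℂ) * (starRingEnd ℂ (x m k)) * y k) :=
        Finset.sum_comm
    _ = ∑ m ∈ s, (starRingEnd ℂ (c m)) * ∑ k ∈ Finset.range (N+1),
          (ω k : ℂ) * (starRingEnd ℂ (x m k)) * y k := by
        apply Finset.sum_congr rfl; intro m _; rw [Finset.mul_sum]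

lemma abs_en_le (hpos : ∀ k, 0 < ω k) (N : ℕ) (x y : ℕ → ℂ) :
    ‖en ω N x y‖ ≤ Real.sqrt (nr ω N x) * Real.sqrt (nr ω N y) := by
  have h1 : ‖en ω N x y‖ ≤
      ∑ k ∈ Finset.range (N+1), ω k * (‖x k‖ * ‖y k‖) := by
    refine le_trans (norm_sum_le _ _) (Finset.sum_le_sum fun k _ => ?_)
    rw [norm_mul, norm_mul]
    rw [Complex.norm_real, Real.norm_eq_abs, Complex.norm_conj]
    rw [abs_of_pos (hpos k), mul_assoc]
  refine le_trans h1 ?_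
  have h2 : (∑ k ∈ Finset.range (N+1), ω k * (‖x k‖ * ‖y k‖))^2
      ≤ nr ω N x * nr ω N y := by
    have hL : (∑ k ∈ Finset.range (N+1), ω k * (‖x k‖ * ‖y k‖))
        = ∑ k ∈ Finset.range (N+1),
            (Real.sqrt (ω k) * ‖x k‖) * (Real.sqrt (ω k) * ‖y k‖) :=
      Finset.sum_congr rfl (fun k _ => by
        rw [show (Real.sqrt (ω k) * ‖x k‖) * (Real.sqrt (ω k) * ‖y k‖)
            = (Real.sqrt (ω k) * Real.sqrt (ω k)) * (‖x k‖ * ‖y k‖) by ring,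
          Real.mul_self_sqrt (hpos k).le])
    have hX : nr ω N x = ∑ k ∈ Finset.range (N+1), (Real.sqrt (ω k) * ‖x k‖)^2 :=
      Finset.sum_congr rfl (fun k _ => by rw [mul_pow, Real.sq_sqrt (hpos k).le])
    have hY : nr ω N y = ∑ k ∈ Finset.range (N+1), (Real.sqrt (ω k) * ‖y k‖)^2 :=
      Finset.sum_congr rfl (fun k _ => by rw [mul_pow, Real.sq_sqrt (hpos k).le])
    rw [hL, hX, hY]
    exact Finset.sum_mul_sq_le_sq_mul_sq _ _ _
  have hx := nr_nonneg hpos N x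
  have hy := nr_nonneg hpos N y
  have hsn : 0 ≤ ∑ k ∈ Finset.range (N+1), ω k * (‖x k‖ * ‖y k‖) :=
    Finset.sum_nonneg (fun k _ => mul_nonneg (hpos k).le
      (mul_nonneg (norm_nonneg _) (norm_nonneg _)))
  calc (∑ k ∈ Finset.range (N+1), ω k * (‖x k‖ * ‖y k‖))
      ≤ Real.sqrt (nr ω N x * nr ω N y) := by
        rw [Real.le_sqrt hsn (mul_nonneg hx hy)]
        exact h2
    _ = Real.sqrt (nr ω N x) * Real.sqrt (nr ω N y) := Real.sqrt_mul hx _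

lemma nr_smul (N : ℕ) (c : ℂ) (x : ℕ → ℂ) :
    nr ω N (fun k => c * x k) = ‖c‖ ^ 2 * nr ω N x := by
  unfold nr
  rw [Finset.mul_sum]
  apply Finset.sum_congr rfl
  intro k _
  rw [norm_mul]
  ring

lemma nr_sum_le {ι : Type*} (hpos : ∀ k, 0 < ω k) (s : Finset ι) (N : ℕ) (y : ι → ℕ → ℂ) :
    nr ω N (fun k => ∑ m ∈ s, y m k) ≤ s.card * ∑ m ∈ s, nr ω N (y m) := by
  simp only [nr]
  have step : ∀ k ∈ Finset.range (N+1),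
      ω k * ‖∑ m ∈ s, y m k‖ ^ 2 ≤ ∑ m ∈ s, (s.card : ℝ) * (ω k * ‖y m k‖ ^2) := by
    intro k _
    rw [← Finset.mul_sum]
    have habs : ‖∑ m ∈ s, y m k‖ ≤ ∑ m ∈ s, ‖y m k‖ :=
      norm_sum_le _ _
    have hsq : ‖∑ m ∈ s, y m k‖ ^ 2 ≤ (∑ m ∈ s, ‖y m k‖) ^ 2 := by
      apply pow_le_pow_left₀ (norm_nonneg _) habs
    have hcs : (∑ m ∈ s, ‖y m k‖) ^ 2 ≤ s.card * ∑ m ∈ s, ‖y m k‖ ^ 2 :=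
      sq_sum_le_card_mul_sum_sq
    have hω := (hpos k).le
    calc ω k * ‖∑ m ∈ s, y m k‖ ^ 2
        ≤ ω k * ((s.card : ℝ) * ∑ m ∈ s, ‖y m k‖ ^ 2) := by nlinarith
      _ = (s.card : ℝ) * (ω k * ∑ m ∈ s, ‖y m k‖ ^ 2) := by ring
      _ = (s.card : ℝ) * ∑ m ∈ s, ω k * ‖y m k‖ ^ 2 := by rw [Finset.mul_sum]
  calc ∑ k ∈ Finset.range (N+1), ω k * ‖∑ m ∈ s, y m k‖ ^ 2
      ≤ ∑ k ∈ Finset.range (N+1), ∑ m ∈ s, (s.card : ℝ) * (ω k * ‖y m k‖ ^ 2) :=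
        Finset.sum_le_sum step
    _ = ∑ m ∈ s, ∑ k ∈ Finset.range (N+1), (s.card : ℝ) * (ω k * ‖y m k‖ ^ 2) :=
        Finset.sum_comm
    _ = ∑ m ∈ s, (s.card : ℝ) * ∑ k ∈ Finset.range (N+1), ω k * ‖y m k‖ ^ 2 := by
        apply Finset.sum_congr rfl; intro m _; rw [Finset.mul_sum]
    _ = (s.card : ℝ) * ∑ m ∈ s, ∑ k ∈ Finset.range (N+1), ω k * ‖y m k‖ ^ 2 :=
        (Finset.mul_sum _ _ _).symm

end AW

namespace AW
variable {ω : ℕ → ℝ}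

/-- Minimal norm property: `g = ∑ a_m κ_m` has minimal weighted norm among
elements with the same inner products against the kernels. -/
lemma nr_min {d : ℕ} (hpos : ∀ k, 0 < ω k) (N : ℕ) (ζ : Fin d → ℂ) (a : Fin d → ℂ)
    (x : ℕ → ℂ)
    (hx : ∀ m, en ω N (kfun ω (ζ m)) x = en ω N (kfun ω (ζ m))
      (fun k => ∑ m', a m' * kfun ω (ζ m') k)) :
    nr ω N (fun k => ∑ m', a m' * kfun ω (ζ m') k) ≤ nr ω N x := by
  set g : ℕ → ℂ := fun k => ∑ m', a m' * kfun ω (ζ m') k with hg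
  set D : ℕ → ℂ := fun k => x k - g k with hD
  have henD : ∀ m, en ω N (kfun ω (ζ m)) D = 0 := by
    intro m
    have : en ω N (kfun ω (ζ m)) D
        = en ω N (kfun ω (ζ m)) x - en ω N (kfun ω (ζ m)) g := by
      simp only [en, hD]
      rw [← Finset.sum_sub_distrib]
      apply Finset.sum_congr rfl; intro k _; ring
    rw [this, hx m, sub_self]
  have horto : en ω N g D = 0 := by
    rw [show en ω N g D = en ω N (fun k => ∑ m', a m' * kfun ω (ζ m') k) D from rfl]
    rw [en_left_sum]
    apply Finset.sum_eq_zero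
    intro m _
    rw [henD m, mul_zero]
  have hexp : nr ω N x = nr ω N g + nr ω N D + 2 * (en ω N g D).re := by
    simp only [nr, en]
    rw [Complex.re_sum, Finset.mul_sum, ← Finset.sum_add_distrib, ← Finset.sum_add_distrib]
    apply Finset.sum_congr rfl
    intro k _
    have hx' : x k = g k + D k := by simp [hD]
    rw [hx']
    rw [Complex.sq_norm, Complex.sq_norm, Complex.sq_norm, Complex.normSq_add]
    have h1 : ((ω k : ℂ) * (starRingEnd ℂ) (g k) * D k).re
        = ω k * ((starRingEnd ℂ) (g k) * D k).re := by
      rw [show (ω k : ℂ) * (starRingEnd ℂ) (g k) * D k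
          = (ω k : ℂ) * ((starRingEnd ℂ) (g k) * D k) by ring, Complex.re_ofReal_mul]
    have h2 : ((starRingEnd ℂ) (g k) * D k).re = (g k * (starRingEnd ℂ) (D k)).re := by
      rw [← Complex.conj_re (g k * (starRingEnd ℂ) (D k)), map_mul, Complex.conj_conj]
    rw [h1, h2]
    ring
  rw [hexp, horto]
  simp only [Complex.zero_re, mul_zero, add_zero]
  nlinarith [nr_nonneg hpos N D]

end AW

namespace AW
variable {ω : ℕ → ℝ}

/-- truncated kernel as a polynomial in `z` -/
def kpoly (ω : ℕ → ℝ) (b : ℂ) (M : ℕ) : Polynomial ℂ :=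
  ∑ k ∈ Finset.range (M + 1), Polynomial.monomial k ((starRingEnd ℂ b) ^ k / (ω k : ℂ))

lemma kpoly_coeff (b : ℂ) (M k : ℕ) :
    (kpoly ω b M).coeff k = if k ≤ M then (starRingEnd ℂ b) ^ k / (ω k : ℂ) else 0 := by
  unfold kpoly
  rw [Polynomial.finset_sum_coeff]
  simp only [Polynomial.coeff_monomial]
  rw [Finset.sum_ite_eq' (Finset.range (M+1)) k]
  simp [Nat.lt_succ_iff]

lemma kpoly_natDegree (b : ℂ) (M : ℕ) : (kpoly ω b M).natDegree ≤ M := by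
  unfold kpoly
  apply Polynomial.natDegree_sum_le_of_forall_le
  intro k hk
  exact le_trans (Polynomial.natDegree_monomial_le _) (by
    simpa [Nat.lt_succ_iff] using Finset.mem_range.mp hk)

lemma kpoly_eval (b c : ℂ) (M : ℕ) : (kpoly ω b M).eval c = kN ω M c b := by
  unfold kpoly kN
  rw [Polynomial.eval_finset_sum]
  apply Finset.sum_congr rfl
  intro k _
  rw [Polynomial.eval_monomial]
  ring

lemma kN_diag (hpos : ∀ k, 0 < ω k) (b : ℂ) (M : ℕ) :
    kN ω M b b = ((TT ω (‖b‖ ^ 2) M : ℝ) : ℂ) := by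
  unfold kN TT
  push_cast
  apply Finset.sum_congr rfl
  intro k _
  congr 1
  rw [← mul_pow, mul_comm, Complex.mul_conj, Complex.normSq_eq_norm_sq]
  push_cast
  ring

/-- Key norm bound for `J · kpoly`. -/
lemma nr_mul_kpoly (hpos : ∀ k, 0 < ω k) {B : ℝ}
    (hB : ∀ k j : ℕ, ω (k + j) ≤ B * 2 ^ j * ω k) (J : Polynomial ℂ) {d : ℕ} (hd : 0 < d)
    (hJ : J.natDegree < d) (b : ℂ) {M N : ℕ} (hMN : M + (d - 1) ≤ N) :
    nr ω N (fun k => (J * kpoly ω b M).coeff k)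
      ≤ (d * ∑ j ∈ Finset.range d, ‖J.coeff j‖ ^ 2 * (B * 2 ^ j))
        * TT ω (‖b‖ ^ 2) M := by
  set G : ℕ → ℕ → ℂ := fun j k => J.coeff j * (if j ≤ k then (kpoly ω b M).coeff (k - j) else 0)
    with hG
  have hcoeff : ∀ k, (J * kpoly ω b M).coeff k = ∑ j ∈ Finset.range d, G j k := by
    intro k
    rw [Polynomial.coeff_mul, Finset.Nat.sum_antidiagonal_eq_sum_range_succ_mk]
    have h1 : ∑ j ∈ Finset.range (k+1), J.coeff j * (kpoly ω b M).coeff (k - j)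
        = ∑ j ∈ Finset.range (k+1), G j k := by
      apply Finset.sum_congr rfl
      intro j hj
      have : j ≤ k := by simpa [Nat.lt_succ_iff] using Finset.mem_range.mp hj
      simp [hG, this]
    rw [h1]
    -- both equal sum over range (max (k+1) d)
    have h2 : ∑ j ∈ Finset.range (k+1), G j k = ∑ j ∈ Finset.range (max (k+1) d), G j k := by
      apply Finset.sum_subset (Finset.range_subset_range.mpr (le_max_left _ _))
      intro j hj hnot
      have : k < j := by
        simp only [Finset.mem_range] at hj hnot
        omega
      simp [hG, Nat.not_le.mpr this]
    have h3 : ∑ j ∈ Finset.range d, G j k = ∑ j ∈ Finset.range (max (k+1) d), G j k := by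
      apply Finset.sum_subset (Finset.range_subset_range.mpr (le_max_right _ _))
      intro j hj hnot
      have : d ≤ j := by
        simp only [Finset.mem_range] at hj hnot
        omega
      have hz : J.coeff j = 0 := Polynomial.coeff_eq_zero_of_natDegree_lt (by omega)
      simp [hG, hz]
    rw [h2, ← h3]
  -- bound nr
  have hstep1 : nr ω N (fun k => (J * kpoly ω b M).coeff k)
      ≤ d * ∑ j ∈ Finset.range d, ∑ k ∈ Finset.range (N+1), ω k * ‖G j k‖ ^ 2 := by
    have := nr_sum_le hpos (Finset.range d) N (fun j k => G j k)
    rw [Finset.card_range] at this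
    calc nr ω N (fun k => (J * kpoly ω b M).coeff k)
        = nr ω N (fun k => ∑ j ∈ Finset.range d, G j k) := by
          simp only [nr]
          apply Finset.sum_congr rfl; intro k _; rw [hcoeff k]
      _ ≤ d * ∑ j ∈ Finset.range d, nr ω N (G j) := this
      _ = d * ∑ j ∈ Finset.range d, ∑ k ∈ Finset.range (N+1), ω k * ‖G j k‖ ^ 2 := rfl
  -- inner sum bound
  have hstep2 : ∀ j ∈ Finset.range d, ∑ k ∈ Finset.range (N+1), ω k * ‖G j k‖ ^ 2
      ≤ ‖J.coeff j‖ ^ 2 * (B * 2 ^ j) * TT ω (‖b‖ ^ 2) M := by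
    intro j hj
    have hjd : j ≤ d - 1 := by
      have := Finset.mem_range.mp hj; omega
    have hjM : j + M ≤ N := by omega
    -- restrict to the window Ico j (j+M+1)
    have hzero : ∀ k ∈ Finset.range (N+1), k ∉ Finset.Ico j (j + M + 1) →
        ω k * ‖G j k‖ ^ 2 = 0 := by
      intro k _ hk
      rw [Finset.mem_Ico] at hk
      push_neg at hk
      by_cases h : j ≤ k
      · have : j + M + 1 ≤ k := hk h
        have hMk : M < k - j := by omega
        have : (kpoly ω b M).coeff (k - j) = 0 :=
          Polynomial.coeff_eq_zero_of_natDegree_lt (lt_of_le_of_lt (kpoly_natDegree b M) hMk)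
        simp [hG, h, this]
      · simp [hG, h]
    have hIco : Finset.Ico j (j + M + 1) ⊆ Finset.range (N+1) := by
      intro k hk
      rw [Finset.mem_Ico] at hk
      exact Finset.mem_range.mpr (by omega)
    have hres : ∑ k ∈ Finset.range (N+1), ω k * ‖G j k‖ ^ 2
        = ∑ k ∈ Finset.Ico j (j + M + 1), ω k * ‖G j k‖ ^ 2 :=
      (Finset.sum_subset hIco (fun k hk hnk => hzero k hk hnk)).symm
    have hshift : ∑ k ∈ Finset.Ico j (j + M + 1), ω k * ‖G j k‖ ^ 2
        = ∑ k' ∈ Finset.range (M+1), ω (j + k') * ‖G j (j + k')‖ ^ 2 := by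
      rw [Finset.sum_Ico_eq_sum_range]
      apply Finset.sum_congr (by congr 1; omega) (fun k' _ => rfl)
    rw [hres, hshift]
    have hterm : ∀ k' ∈ Finset.range (M+1), ω (j + k') * ‖G j (j + k')‖ ^ 2
        ≤ ‖J.coeff j‖ ^ 2 * (B * 2 ^ j) * ((‖b‖ ^ 2) ^ k' / ω k') := by
      intro k' hk'
      have hk'M : k' ≤ M := by simpa [Nat.lt_succ_iff] using Finset.mem_range.mp hk'
      have hcoeff' : G j (j + k') = J.coeff j * ((starRingEnd ℂ b) ^ k' / (ω k' : ℂ)) := by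
        simp only [hG]
        rw [if_pos (Nat.le_add_right j k')]
        rw [show j + k' - j = k' by omega]
        rw [kpoly_coeff]
        rw [if_pos hk'M]
      rw [hcoeff']
      rw [norm_mul, norm_div, norm_pow, Complex.norm_conj, Complex.norm_real, Real.norm_eq_abs,
        abs_of_pos (hpos k'), mul_pow, div_pow]
      have hω := hB k' j
      rw [show k' + j = j + k' by omega] at hω
      have h1 := hpos k'
      have h2 := hpos (j + k')
      have hb0 : (0:ℝ) ≤ ‖b‖ := norm_nonneg b
      have hBpos : (0:ℝ) < B * 2 ^ j := by
        have := hB 0 j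
        nlinarith [hpos 0, hpos j, pow_pos (show (0:ℝ) < 2 by norm_num) j]
      rw [show (‖b‖ ^ k') ^ 2 / (ω k') ^ 2 = (‖b‖ ^ 2) ^ k' / (ω k') ^ 2 by
        rw [← pow_mul, ← pow_mul, Nat.mul_comm]]
      have hbk : (0:ℝ) ≤ (‖b‖ ^ 2) ^ k' := by positivity
      have hC : (0:ℝ) ≤ ‖J.coeff j‖ ^ 2 := by positivity
      have key : ω (j + k') * ((‖b‖ ^ 2) ^ k' / (ω k') ^ 2)
          ≤ B * 2 ^ j * ((‖b‖ ^ 2) ^ k' / ω k') := by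
        have hrw : ω (j + k') * ((‖b‖ ^ 2) ^ k' / (ω k') ^ 2)
            = ((‖b‖ ^ 2) ^ k' / ω k') * (ω (j + k') / ω k') := by
          field_simp
        have hrat : ω (j + k') / ω k' ≤ B * 2 ^ j := by
          rw [div_le_iff₀ h1]; exact hω
        have hXω : (0:ℝ) ≤ (‖b‖ ^ 2) ^ k' / ω k' := by positivity
        rw [hrw]
        calc ((‖b‖ ^ 2) ^ k' / ω k') * (ω (j + k') / ω k')
            ≤ ((‖b‖ ^ 2) ^ k' / ω k') * (B * 2 ^ j) :=
              mul_le_mul_of_nonneg_left hrat hXω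
          _ = B * 2 ^ j * ((‖b‖ ^ 2) ^ k' / ω k') := by ring
      calc ω (j + k') * (‖J.coeff j‖ ^ 2 * ((‖b‖ ^ 2) ^ k' / (ω k') ^ 2))
          = ‖J.coeff j‖ ^ 2
              * (ω (j + k') * ((‖b‖ ^ 2) ^ k' / (ω k') ^ 2)) := by ring
        _ ≤ ‖J.coeff j‖ ^ 2 * (B * 2 ^ j * ((‖b‖ ^ 2) ^ k' / ω k')) :=
            mul_le_mul_of_nonneg_left key hC
        _ = ‖J.coeff j‖ ^ 2 * (B * 2 ^ j) * ((‖b‖ ^ 2) ^ k' / ω k') := by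
            ring
    calc ∑ k' ∈ Finset.range (M+1), ω (j + k') * ‖G j (j + k')‖ ^ 2
        ≤ ∑ k' ∈ Finset.range (M+1), ‖J.coeff j‖ ^ 2 * (B * 2 ^ j)
            * ((‖b‖ ^ 2) ^ k' / ω k') := Finset.sum_le_sum hterm
      _ = ‖J.coeff j‖ ^ 2 * (B * 2 ^ j) * TT ω (‖b‖ ^ 2) M := by
          rw [← Finset.mul_sum]
          rfl
  calc nr ω N (fun k => (J * kpoly ω b M).coeff k)
      ≤ d * ∑ j ∈ Finset.range d, ∑ k ∈ Finset.range (N+1), ω k * ‖G j k‖ ^ 2 :=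
        hstep1
    _ ≤ d * ∑ j ∈ Finset.range d, ‖J.coeff j‖ ^ 2 * (B * 2 ^ j)
          * TT ω (‖b‖ ^ 2) M := by
        apply mul_le_mul_of_nonneg_left (Finset.sum_le_sum hstep2) (by positivity)
    _ = (d * ∑ j ∈ Finset.range d, ‖J.coeff j‖ ^ 2 * (B * 2 ^ j))
          * TT ω (‖b‖ ^ 2) M := by
        rw [← Finset.sum_mul]
        ring

end AW

namespace AW
variable {ω : ℕ → ℝ}

lemma en_kfun_kfun (hpos : ∀ k, 0 < ω k) (N : ℕ) (z b : ℂ) :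
    en ω N (kfun ω z) (kfun ω b) = kN ω N z b := by
  rw [en_kfun_left hpos]
  unfold kfun kN
  apply Finset.sum_congr rfl
  intro k _
  ring

/-- The core quantitative bound. -/
lemma core (hω : IsWeight ω) {d : ℕ} (hd : 0 < d) (ζ : Fin d → ℂ)
    (hζinj : Function.Injective ζ) (hζ1 : ∀ m, 1 ≤ ‖ζ m‖)
    (A : ℕ → Fin d → ℂ)
    (hA : ∀ n l, (∑ m, kN ω (n + d) (ζ l) (ζ m) * A n m) = 1) :
    ∀ i, ∃ C : ℝ, 0 < C ∧ ∀ n,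
      ‖A n i‖ ^ 2 * (S ω (n + d) * TT ω (‖ζ i‖ ^ 2) (n + d)) ≤ C := by
  intro i
  have hpos := hω.1
  obtain ⟨B, hB1, hBfull⟩ := geom hω (show (1:ℝ) < 2 by norm_num)
  have hB : ∀ k j : ℕ, ω (k + j) ≤ B * 2 ^ j * ω k := fun k j => (hBfull k j).1
  -- Lagrange basis polynomials
  set J : Fin d → Polynomial ℂ := fun m => Lagrange.basis Finset.univ ζ m with hJ
  have hζinjOn : Set.InjOn ζ (Finset.univ : Finset (Fin d)) := fun a _ b _ h => hζinj h
  have hJdeg : ∀ m, (J m).natDegree < d := by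
    intro m
    rw [hJ, Lagrange.natDegree_basis hζinjOn (Finset.mem_univ m)]
    simpa using Nat.sub_lt hd Nat.one_pos
  have hJeval_self : ∀ m, (J m).eval (ζ m) = 1 := fun m =>
    Lagrange.eval_basis_self hζinjOn (Finset.mem_univ m)
  have hJeval_ne : ∀ m l, m ≠ l → (J m).eval (ζ l) = 0 := fun m l h =>
    Lagrange.eval_basis_of_ne h (Finset.mem_univ l)
  set K : Fin d → ℝ := fun m =>
    (d : ℝ) * ∑ j ∈ Finset.range d, ‖(J m).coeff j‖ ^ 2 * (B * 2 ^ j) with hK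
  have hKnonneg : ∀ m, 0 ≤ K m := by
    intro m
    rw [hK]
    apply mul_nonneg (by positivity)
    apply Finset.sum_nonneg
    intro j _
    have h2j : (0:ℝ) < 2 ^ j := by positivity
    have hBj : (0:ℝ) ≤ B * 2 ^ j := by nlinarith
    exact mul_nonneg (sq_nonneg _) hBj
  -- window constants
  obtain ⟨CWi, hCWi1, hCWi⟩ := TT_window hω
    (show (1:ℝ) ≤ ‖ζ i‖ ^ 2 by nlinarith [hζ1 i]) (d - 1)
  obtain ⟨CW1, hCW11, hCW1⟩ := TT_window hω (le_refl (1:ℝ)) (d - 1)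
  have hC0 : 0 ≤ CW1 * CWi * K i * ((d : ℝ) * ∑ m, K m) := by
    have h1 : (0:ℝ) ≤ CW1 := by linarith
    have h2 : (0:ℝ) ≤ CWi := by linarith
    have h4 : (0:ℝ) ≤ ∑ m, K m := Finset.sum_nonneg fun m _ => hKnonneg m
    exact mul_nonneg (mul_nonneg (mul_nonneg h1 h2) (hKnonneg i))
      (mul_nonneg (by positivity) h4)
  refine ⟨CW1 * CWi * K i * ((d : ℝ) * ∑ m, K m) + 1, by linarith, fun n => ?_⟩
  -- Notation for this n
  set N : ℕ := n + d with hN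
  set M : ℕ := n + 1 with hM
  have hMN : M + (d - 1) = N := by omega
  -- the kernel polynomials and the dual polynomials
  set τ : Fin d → ℝ := fun m => TT ω (‖ζ m‖ ^ 2) M with hτ
  have hτpos : ∀ m, 0 < τ m := fun m => TT_pos hpos (by nlinarith [hζ1 m]) M
  have hκdiag : ∀ m, kN ω M (ζ m) (ζ m) = ((τ m : ℝ) : ℂ) := fun m => kN_diag hpos (ζ m) M
  set Q : Fin d → Polynomial ℂ := fun m =>
    Polynomial.C (((τ m : ℝ) : ℂ)⁻¹) * (J m * kpoly ω (ζ m) M) with hQ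
  have hτC0 : ∀ m, ((τ m : ℝ) : ℂ) ≠ 0 := fun m => by
    simpa using (hτpos m).ne'
  have hQeval : ∀ m l, (Q m).eval (ζ l) = if m = l then 1 else 0 := by
    intro m l
    rw [hQ]
    simp only [Polynomial.eval_mul, Polynomial.eval_C, kpoly_eval]
    by_cases h : m = l
    · subst h
      rw [hJeval_self m, hκdiag m]
      simp only [if_pos rfl, one_mul]
      exact inv_mul_cancel₀ (hτC0 m)
    · rw [hJeval_ne m l h]
      simp [h]
  have hQdeg : ∀ m, (Q m).natDegree ≤ N := by
    intro m
    rw [hQ]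
    apply le_trans (Polynomial.natDegree_mul_le)
    have h1 : (Polynomial.C (((τ m : ℝ) : ℂ)⁻¹)).natDegree = 0 := Polynomial.natDegree_C _
    rw [h1, zero_add]
    apply le_trans (Polynomial.natDegree_mul_le)
    have := hJdeg m
    have := kpoly_natDegree (ω := ω) (ζ m) M
    omega
  -- norm bounds for Q m
  have hQnr : ∀ m, nr ω N (fun k => (Q m).coeff k) * τ m ≤ K m := by
    intro m
    have hcoeff : ∀ k, (Q m).coeff k = ((τ m : ℝ) : ℂ)⁻¹ * (J m * kpoly ω (ζ m) M).coeff k := by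
      intro k
      rw [hQ]
      simp [Polynomial.coeff_C_mul]
    have h1 : nr ω N (fun k => (Q m).coeff k)
        = ‖((τ m : ℝ) : ℂ)⁻¹‖ ^ 2 * nr ω N (fun k => (J m * kpoly ω (ζ m) M).coeff k) := by
      rw [← nr_smul]
      simp only [nr]
      apply Finset.sum_congr rfl
      intro k _
      rw [hcoeff k]
    have h2 := nr_mul_kpoly hpos hB (J m) hd (hJdeg m) (ζ m) (le_of_eq hMN)
    have habsτ : ‖((τ m : ℝ) : ℂ)⁻¹‖ = (τ m)⁻¹ := by
      rw [norm_inv, Complex.norm_real, Real.norm_eq_abs, abs_of_pos (hτpos m)]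
    rw [h1, habsτ]
    have hτm := hτpos m
    have hKm' : (d : ℝ) * ∑ j ∈ Finset.range d, ‖(J m).coeff j‖ ^ 2 * (B * 2 ^ j) = K m := rfl
    calc ((τ m)⁻¹) ^ 2 * nr ω N (fun k => (J m * kpoly ω (ζ m) M).coeff k) * τ m
        ≤ ((τ m)⁻¹) ^ 2 * (K m * τ m) * τ m := by
          have := mul_le_mul_of_nonneg_left h2 (show (0:ℝ) ≤ ((τ m)⁻¹)^2 by positivity)
          rw [hKm'] at this
          nlinarith [this, hτm]
      _ = K m := by
          field_simp
  -- the vector g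
  set g : ℕ → ℂ := fun k => ∑ m, A n m * kfun ω (ζ m) k with hg
  have hg1 : ∀ l, en ω N (kfun ω (ζ l)) g = 1 := by
    intro l
    rw [hg, en_right_sum]
    calc ∑ m, A n m * en ω N (kfun ω (ζ l)) (kfun ω (ζ m))
        = ∑ m, kN ω N (ζ l) (ζ m) * A n m := by
          apply Finset.sum_congr rfl
          intro m _
          rw [en_kfun_kfun hpos]
          ring
      _ = 1 := hA n l
  -- interpolating polynomial p
  set p : Polynomial ℂ := ∑ m, Q m with hp
  have hpdeg : p.natDegree ≤ N := Polynomial.natDegree_sum_le_of_forall_le _ _ (fun m _ => hQdeg m)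
  have hpeval : ∀ l, p.eval (ζ l) = 1 := by
    intro l
    rw [hp, Polynomial.eval_finset_sum]
    rw [Finset.sum_congr rfl (fun m _ => hQeval m l)]
    simp
  -- minimality
  have hgmin : nr ω N g ≤ nr ω N (fun k => p.coeff k) := by
    apply nr_min hpos N ζ (A n)
    intro m
    rw [en_eval hpos (ζ m) hpdeg, hpeval m, hg1 m]
  -- size of p
  have hpnr : nr ω N (fun k => p.coeff k) * S ω M ≤ (d : ℝ) * ∑ m, K m := by
    have hcoeffp : ∀ k, p.coeff k = ∑ m, (Q m).coeff k := by
      intro k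
      rw [hp, Polynomial.finset_sum_coeff]
    have h1 : nr ω N (fun k => p.coeff k) ≤ (d : ℝ) * ∑ m, nr ω N (fun k => (Q m).coeff k) := by
      have := nr_sum_le hpos Finset.univ N (fun m k => (Q m).coeff k)
      rw [Finset.card_univ, Fintype.card_fin] at this
      calc nr ω N (fun k => p.coeff k)
          = nr ω N (fun k => ∑ m, (Q m).coeff k) := by
            simp only [nr]
            exact Finset.sum_congr rfl (fun k _ => by rw [hcoeffp k])
        _ ≤ (d : ℝ) * ∑ m, nr ω N (fun k => (Q m).coeff k) := this
    have hSM : 0 ≤ S ω M := by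
      have := one_le_S hω M; linarith
    have h2 : ∀ m : Fin d, nr ω N (fun k => (Q m).coeff k) * S ω M ≤ K m := by
      intro m
      have hSτ : S ω M ≤ τ m := S_le_TT hpos (by nlinarith [hζ1 m]) M
      have hnn := nr_nonneg hpos N (fun k => (Q m).coeff k)
      calc nr ω N (fun k => (Q m).coeff k) * S ω M
          ≤ nr ω N (fun k => (Q m).coeff k) * τ m := by nlinarith
        _ ≤ K m := hQnr m
    calc nr ω N (fun k => p.coeff k) * S ω M
        ≤ ((d : ℝ) * ∑ m, nr ω N (fun k => (Q m).coeff k)) * S ω M := by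
          apply mul_le_mul_of_nonneg_right h1 hSM
      _ = (d : ℝ) * ∑ m, nr ω N (fun k => (Q m).coeff k) * S ω M := by
          rw [mul_assoc, Finset.sum_mul]
      _ ≤ (d : ℝ) * ∑ m, K m := by
          apply mul_le_mul_of_nonneg_left (Finset.sum_le_sum (fun m _ => h2 m)) (by positivity)
  -- A n i = en (coeff Q i) g
  have hAi : A n i = en ω N (fun k => (Q i).coeff k) g := by
    rw [hg, en_right_sum]
    have hterm : ∀ m : Fin d, A n m * en ω N (fun k => (Q i).coeff k) (kfun ω (ζ m))
        = A n m * (if i = m then 1 else 0) := by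
      intro m
      congr 1
      rw [en_conj_symm, en_eval hpos (ζ m) (hQdeg i), hQeval i m]
      by_cases h : i = m <;> simp [h]
    rw [Finset.sum_congr rfl (fun m _ => hterm m)]
    simp
  -- Cauchy-Schwarz
  have hCS : ‖A n i‖ ^ 2 ≤ nr ω N (fun k => (Q i).coeff k) * nr ω N g := by
    rw [hAi]
    have h := abs_en_le hpos N (fun k => (Q i).coeff k) g
    have h1 := nr_nonneg hpos N (fun k => (Q i).coeff k)
    have h2 := nr_nonneg hpos N g
    have habs := norm_nonneg (en ω N (fun k => (Q i).coeff k) g)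
    calc ‖en ω N (fun k => (Q i).coeff k) g‖ ^ 2
        ≤ (Real.sqrt (nr ω N (fun k => (Q i).coeff k)) * Real.sqrt (nr ω N g)) ^ 2 := by
          apply pow_le_pow_left₀ habs h
      _ = nr ω N (fun k => (Q i).coeff k) * nr ω N g := by
          rw [mul_pow, Real.sq_sqrt h1, Real.sq_sqrt h2]
  -- window bounds
  have hWi : TT ω (‖ζ i‖ ^ 2) N ≤ CWi * τ i := by
    have := hCWi M
    rwa [hMN] at this
  have hW1 : S ω N ≤ CW1 * S ω M := by
    have := hCW1 M
    rw [hMN] at this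
    rwa [TT_one, TT_one] at this
  -- final assembly
  have hnrQ := nr_nonneg hpos N (fun k => (Q i).coeff k)
  have hnrg := nr_nonneg hpos N g
  have hgS : nr ω N g * S ω M ≤ (d : ℝ) * ∑ m, K m := by
    have hSM : 0 ≤ S ω M := by have := one_le_S hω M; linarith
    calc nr ω N g * S ω M ≤ nr ω N (fun k => p.coeff k) * S ω M := by
          apply mul_le_mul_of_nonneg_right hgmin hSM
      _ ≤ (d : ℝ) * ∑ m, K m := hpnr
  have hQτ := hQnr i
  have hτi := hτpos i
  have hSM1 := one_le_S hω M
  have hSN1 := one_le_S hω N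
  have hTN : 0 < TT ω (‖ζ i‖ ^ 2) N := TT_pos hpos (by nlinarith [hζ1 i]) N
  have habsA := norm_nonneg (A n i)
  have key : ‖A n i‖ ^ 2 * (S ω N * TT ω (‖ζ i‖ ^ 2) N)
      ≤ CW1 * CWi * ((nr ω N (fun k => (Q i).coeff k) * τ i) * (nr ω N g * S ω M)) := by
    have hSN0 : 0 ≤ S ω N := by linarith
    have e1 : ‖A n i‖ ^ 2 * (S ω N * TT ω (‖ζ i‖ ^ 2) N)
        ≤ (nr ω N (fun k => (Q i).coeff k) * nr ω N g) * (S ω N * TT ω (‖ζ i‖ ^ 2) N) := by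
      apply mul_le_mul_of_nonneg_right hCS (by positivity)
    refine le_trans e1 ?_
    have e2 : S ω N * TT ω (‖ζ i‖ ^ 2) N ≤ (CW1 * S ω M) * (CWi * τ i) := by
      apply mul_le_mul hW1 hWi (le_of_lt hTN) (by positivity)
    calc (nr ω N (fun k => (Q i).coeff k) * nr ω N g) * (S ω N * TT ω (‖ζ i‖ ^ 2) N)
        ≤ (nr ω N (fun k => (Q i).coeff k) * nr ω N g) * ((CW1 * S ω M) * (CWi * τ i)) := by
          apply mul_le_mul_of_nonneg_left e2 (mul_nonneg hnrQ hnrg)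
      _ = CW1 * CWi * ((nr ω N (fun k => (Q i).coeff k) * τ i) * (nr ω N g * S ω M)) := by
          ring
  refine le_trans key ?_
  have hfin : (nr ω N (fun k => (Q i).coeff k) * τ i) * (nr ω N g * S ω M)
      ≤ K i * ((d : ℝ) * ∑ m, K m) := by
    have h1 : 0 ≤ nr ω N g * S ω M := mul_nonneg hnrg (by linarith)
    have h2 : 0 ≤ nr ω N (fun k => (Q i).coeff k) * τ i := mul_nonneg hnrQ (le_of_lt hτi)
    apply mul_le_mul hQτ hgS h1 (hKnonneg i)
  have hcw : (0:ℝ) ≤ CW1 * CWi := by nlinarith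
  calc CW1 * CWi * ((nr ω N (fun k => (Q i).coeff k) * τ i) * (nr ω N g * S ω M))
      ≤ CW1 * CWi * (K i * ((d : ℝ) * ∑ m, K m)) := mul_le_mul_of_nonneg_left hfin hcw
    _ = CW1 * CWi * K i * ((d : ℝ) * ∑ m, K m) := by ring
    _ ≤ CW1 * CWi * K i * ((d : ℝ) * ∑ m, K m) + 1 := by linarith

end AW


/-- Summed bounds for the coefficients `A_{i,n}`. -/
theorem A_summed_bounds
    (ω : ℕ → ℝ) (hω : IsWeight ω) (d d₁ : ℕ) (hd₁ : 1 ≤ d₁) (hd : d₁ ≤ d)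
    (z : ℕ → ℂ) (hinj : Set.InjOn z (Set.Icc 1 d))
    (hcirc : ∀ i, 1 ≤ i → i ≤ d₁ → ‖z i‖ = 1)
    (hout : ∀ i, d₁ < i → i ≤ d → 1 < ‖z i‖)
    (f : Polynomial ℂ)
    (hf : f = ∏ i ∈ Finset.Icc 1 d, (Polynomial.X - Polynomial.C (z i)))
    (E : ℕ → Matrix (Fin d) (Fin d) ℂ)
    (hE : ∀ n, E n = Matrix.of fun (l m : Fin d) =>
      kN ω (n + d) (z ((l : ℕ) + 1)) (z ((m : ℕ) + 1)))
    (A : ℕ → Fin d → ℂ)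
    (hA : ∀ n, (E n).mulVec (A n) = fun _ => 1) :
    (∀ i : Fin d, (i : ℕ) + 1 ≤ d₁ → ∃ Ci : ℝ, ∀ n,
      (∑ k ∈ Finset.range (n + d + 1),
        ‖A n i * (starRingEnd ℂ (z ((i : ℕ) + 1))) ^ k / (ω k : ℂ)‖) ≤ Ci) ∧
    (∀ i : Fin d, d₁ < (i : ℕ) + 1 →
      Filter.Tendsto (fun n => ∑ k ∈ Finset.range (n + d + 1),
        ‖A n i * (starRingEnd ℂ (z ((i : ℕ) + 1))) ^ k / (ω k : ℂ)‖)
        Filter.atTop (nhds 0)) := by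
  have hpos := hω.1
  have hdpos : 0 < d := by omega
  set ζ : Fin d → ℂ := fun m => z ((m : ℕ) + 1) with hζ
  have hζinj : Function.Injective ζ := by
    intro a b hab
    have ha : ((a:ℕ)+1 : ℕ) ∈ Set.Icc 1 d := ⟨by omega, by have := a.isLt; omega⟩
    have hb : ((b:ℕ)+1 : ℕ) ∈ Set.Icc 1 d := ⟨by omega, by have := b.isLt; omega⟩
    have := hinj ha hb hab
    have : (a:ℕ) = (b:ℕ) := by omega
    exact Fin.ext this
  have hζ1 : ∀ m, 1 ≤ ‖ζ m‖ := by
    intro m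
    by_cases h : (m:ℕ)+1 ≤ d₁
    · rw [show ‖ζ m‖ = 1 from hcirc _ (by omega) h]
    · have := hout ((m:ℕ)+1) (by omega) (by have := m.isLt; omega)
      exact le_of_lt this
  have hA' : ∀ n l, (∑ m, kN ω (n + d) (ζ l) (ζ m) * A n m) = 1 := by
    intro n l
    have h := congrFun (hA n) l
    rw [hE n] at h
    simpa [Matrix.mulVec, dotProduct] using h
  have hcore := AW.core hω hdpos ζ hζinj hζ1 A hA'
  constructor
  · -- circle points
    intro i hi
    obtain ⟨C, hC0, hC⟩ := hcore i
    refine ⟨Real.sqrt C, fun n => ?_⟩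
    have habs : ‖ζ i‖ = 1 := hcirc _ (by omega) hi
    have hsum : (∑ k ∈ Finset.range (n + d + 1),
        ‖A n i * (starRingEnd ℂ (z ((i:ℕ)+1))) ^ k / (ω k : ℂ)‖)
        = ‖A n i‖ * S ω (n+d) := by
      rw [S, Finset.mul_sum]
      apply Finset.sum_congr rfl
      intro k _
      rw [norm_div, norm_mul, norm_pow, Complex.norm_conj, Complex.norm_real, Real.norm_eq_abs,
        abs_of_pos (hpos k)]
      rw [show z ((i:ℕ)+1) = ζ i from rfl, habs]
      rw [one_pow, mul_one]
      rw [mul_one_div]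
    rw [hsum]
    have hb := hC n
    rw [habs, one_pow, AW.TT_one] at hb
    have hS1 := AW.one_le_S hω (n+d)
    have habsA := norm_nonneg (A n i)
    have hsq : (‖A n i‖ * S ω (n+d))^2 ≤ C := by nlinarith [hb]
    calc ‖A n i‖ * S ω (n+d)
        ≤ Real.sqrt ((‖A n i‖ * S ω (n+d))^2) := by
          rw [Real.sqrt_sq (by positivity)]
      _ ≤ Real.sqrt C := Real.sqrt_le_sqrt hsq
  · -- outside points
    intro i hi
    obtain ⟨C, hC0, hC⟩ := hcore i
    have hr1 : 1 < ‖ζ i‖ := hout _ (by omega) (by have := i.isLt; omega)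
    set r : ℝ := ‖ζ i‖ with hrdef
    obtain ⟨Cr, hCr0, hCr⟩ := AW.TT_upper hω hr1
    have hsum : ∀ n, (∑ k ∈ Finset.range (n + d + 1),
        ‖A n i * (starRingEnd ℂ (z ((i:ℕ)+1))) ^ k / (ω k : ℂ)‖)
        = ‖A n i‖ * AW.TT ω r (n+d) := by
      intro n
      rw [AW.TT, Finset.mul_sum]
      apply Finset.sum_congr rfl
      intro k _
      rw [norm_div, norm_mul, norm_pow, Complex.norm_conj, Complex.norm_real, Real.norm_eq_abs,
        abs_of_pos (hpos k)]
      rw [show z ((i:ℕ)+1) = ζ i from rfl, ← hrdef]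
      rw [mul_div_assoc]
    have hbound : ∀ n, (‖A n i‖ * AW.TT ω r (n+d))^2
        * (ω (n+d) * S ω (n+d)) ≤ C * Cr^2 := by
      intro n
      set N : ℕ := n + d with hN
      have hb := hC n
      have hT1 : 0 < AW.TT ω r N := AW.TT_pos hpos (by linarith) N
      have hT2 : 0 < AW.TT ω (r^2) N := AW.TT_pos hpos (by nlinarith) N
      have hw : 0 < ω N := hpos N
      have hS1 := AW.one_le_S hω N
      have hS0 : 0 < S ω N := by linarith
      have h2 := hCr N
      have h3 : (r^N)^2 ≤ AW.TT ω (r^2) N * ω N := by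
        have := AW.term_le_TT hpos (show (0:ℝ) ≤ r^2 by positivity) N
        rw [div_le_iff₀ hw] at this
        calc (r^N)^2 = (r^2)^N := by rw [← pow_mul, ← pow_mul, Nat.mul_comm]
          _ ≤ AW.TT ω (r^2) N * ω N := this
      have hTw : 0 < AW.TT ω (r^2) N * ω N := mul_pos hT2 hw
      rw [← mul_le_mul_iff_of_pos_right hTw]
      have habsA := norm_nonneg (A n i)
      calc (‖A n i‖ * AW.TT ω r N)^2 * (ω N * S ω N) * (AW.TT ω (r^2) N * ω N)
          = (‖A n i‖^2 * (S ω N * AW.TT ω (r^2) N)) * ((AW.TT ω r N * ω N)^2) := by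
            ring
        _ ≤ C * ((Cr * r^N)^2) := by
            apply mul_le_mul hb _ (by positivity) hC0.le
            apply pow_le_pow_left₀ (by positivity) h2
        _ = (C * Cr^2) * (r^N)^2 := by ring
        _ ≤ (C * Cr^2) * (AW.TT ω (r^2) N * ω N) :=
            mul_le_mul_of_nonneg_left h3 (by positivity)
    -- conclude tendsto
    have hF0 : ∀ n, 0 ≤ ‖A n i‖ * AW.TT ω r (n+d) := by
      intro n
      exact mul_nonneg (norm_nonneg _) (AW.TT_pos hpos (by linarith) (n+d)).le
    have hws : Filter.Tendsto (fun n => ω (n+d) * S ω (n+d)) Filter.atTop Filter.atTop :=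
      (AW.wS_tendsto hω).comp (tendsto_add_atTop_nat d)
    have hdiv : Filter.Tendsto (fun n => (C * Cr^2) / (ω (n+d) * S ω (n+d)))
        Filter.atTop (nhds 0) := Tendsto.div_atTop tendsto_const_nhds hws
    have hsqrt : Filter.Tendsto (fun n => Real.sqrt ((C * Cr^2) / (ω (n+d) * S ω (n+d))))
        Filter.atTop (nhds 0) := by
      have := (Real.continuous_sqrt.tendsto 0).comp hdiv
      rwa [Real.sqrt_zero] at this
    have hle : ∀ n, ‖A n i‖ * AW.TT ω r (n+d)
        ≤ Real.sqrt ((C * Cr^2) / (ω (n+d) * S ω (n+d))) := by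
      intro n
      have hw : 0 < ω (n+d) := hpos (n+d)
      have hS1 := AW.one_le_S hω (n+d)
      have hws0 : 0 < ω (n+d) * S ω (n+d) := by nlinarith
      have h := hbound n
      have hsq : (‖A n i‖ * AW.TT ω r (n+d))^2
          ≤ (C * Cr^2) / (ω (n+d) * S ω (n+d)) := by
        rw [le_div_iff₀ hws0]
        exact h
      rw [Real.le_sqrt (hF0 n) (by positivity)]
      exact hsq
    have : Filter.Tendsto (fun n => ‖A n i‖ * AW.TT ω r (n+d))
        Filter.atTop (nhds 0) := squeeze_zero hF0 hle hsqrt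
    apply this.congr
    intro n
    exact (hsum n).symm

end
end
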